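/- arXiv:1805.09151 — 4 statements merged into one kernel-verified Lean document; each statement's English description precedes it below -/
import Mathlib

section
/- Let G ∈ 𝒞𝒢^s(n) with 2 ≤ s ≤ n−3 be a non-reduced X-complete graph (with respect to a minimum-degree vertex v*, X = N(v*), Y = V(G) ∖ N[v*]), and let x, x' ∈ X be non-reduced vertices. Then G ∈ 𝒢_3^s(n). -/
set_option linter.unusedSectionVars false
set_option maxHeartbeats 1000000

open Matrix BigOperators Finset

namespace TwoPosEig

variable {V : Type*}

/-- The real adjacency matrix of a simple graph (classical decidability). -/
noncomputable def adjMat [Fintype V] [DecidableEq V] (G : SimpleGraph V) : Matrix V V ℝ :=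
  letI := Classical.decRel G.Adj
  G.adjMatrix ℝ

lemma adjMat_isHermitian [Fintype V] [DecidableEq V] (G : SimpleGraph V) :
    (adjMat G).IsHermitian := by
  letI := Classical.decRel G.Adj
  rw [Matrix.IsHermitian, Matrix.conjTranspose_eq_transpose_of_trivial]
  exact SimpleGraph.isSymm_adjMatrix G

section Spectral
variable {ι : Type*} [Fintype ι] [DecidableEq ι] {A : Matrix ι ι ℝ}


variable (hA : A.IsHermitian)

noncomputable def coords (x : ι → ℝ) : ι → ℝ :=
  (star (hA.eigenvectorUnitary : Matrix ι ι ℝ)) *ᵥ x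

lemma coords_smul (a : ℝ) (x : ι → ℝ) : coords hA (a • x) = a • coords hA x := by
  simp [coords, Matrix.mulVec_smul]

lemma coords_sum {κ : Type*} (s : Finset κ) (f : κ → ι → ℝ) :
    coords hA (∑ a ∈ s, f a) = ∑ a ∈ s, coords hA (f a) := by
  simp only [coords]
  exact map_sum (Matrix.mulVecLin _) _ _

lemma qf_eq_sum (x : ι → ℝ) :
    x ⬝ᵥ (A *ᵥ x) = ∑ i, hA.eigenvalues i * (coords hA x i) ^ 2 := by
  conv_lhs => rw [hA.spectral_theorem]
  have hofReal : (RCLike.ofReal ∘ hA.eigenvalues : ι → ℝ) = hA.eigenvalues := by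
    funext i; simp [RCLike.ofReal_real_eq_id]
  rw [hofReal]
  rw [Unitary.conjStarAlgAut_apply, ← Matrix.mulVec_mulVec, ← Matrix.mulVec_mulVec, Matrix.dotProduct_mulVec]
  have hstar : (star (hA.eigenvectorUnitary : Matrix ι ι ℝ)) *ᵥ x
      = x ᵥ* (hA.eigenvectorUnitary : Matrix ι ι ℝ) := by
    rw [Matrix.star_eq_conjTranspose, Matrix.conjTranspose_eq_transpose_of_trivial,
      Matrix.mulVec_transpose]
  rw [show coords hA x = x ᵥ* (hA.eigenvectorUnitary : Matrix ι ι ℝ) from hstar] at *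
  rw [← hstar, hstar]
  simp only [dotProduct, Matrix.mulVec_diagonal]
  exact Finset.sum_congr rfl fun i _ => by ring

lemma coords_combo (k : ℕ) (g : Fin k → ℝ) (w : Fin k → ι → ℝ) (i : ι) :
    coords hA (∑ a, g a • w a) i = ∑ a, g a * coords hA (w a) i := by
  rw [coords_sum]
  rw [Finset.sum_apply]
  exact Finset.sum_congr rfl fun a _ => by rw [coords_smul]; rfl

lemma le_card_pos (k : ℕ) (w : Fin k → ι → ℝ)
    (hw : ∀ α : Fin k → ℝ, α ≠ 0 → 0 < (∑ a, α a • w a) ⬝ᵥ (A *ᵥ (∑ a, α a • w a))) :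
    k ≤ Nat.card {i : ι // 0 < hA.eigenvalues i} := by
  classical
  rw [Nat.card_eq_fintype_card]
  by_contra h
  push_neg at h
  set r : Fin k → ({i : ι // 0 < hA.eigenvalues i} → ℝ) :=
    fun a j => coords hA (w a) j.1 with hr
  have hnli : ¬ LinearIndependent ℝ r := by
    intro hli
    have h2 := hli.fintype_card_le_finrank
    rw [Module.finrank_pi] at h2
    simp only [Fintype.card_fin] at h2
    omega
  obtain ⟨g, hg0, a0, ha0⟩ := Fintype.not_linearIndependent_iff.mp hnli
  have hgne : g ≠ 0 := fun h' => ha0 (by simp [h'])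
  have hq := hw g hgne
  have hcoords : ∀ i : ι, 0 < hA.eigenvalues i → coords hA (∑ a, g a • w a) i = 0 := by
    intro i hi
    have h3 := congrFun hg0 ⟨i, hi⟩
    simp only [Finset.sum_apply, Pi.smul_apply, Pi.zero_apply, smul_eq_mul, hr] at h3
    rw [coords_combo]
    exact h3
  have hle : (∑ a, g a • w a) ⬝ᵥ (A *ᵥ (∑ a, g a • w a)) ≤ 0 := by
    rw [qf_eq_sum hA]
    apply Finset.sum_nonpos
    intro i _
    by_cases hi : 0 < hA.eigenvalues i
    · rw [hcoords i hi]; simp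
    · push_neg at hi
      exact mul_nonpos_of_nonpos_of_nonneg hi (sq_nonneg _)
  linarith

lemma le_card_neg (k : ℕ) (w : Fin k → ι → ℝ)
    (hw : ∀ α : Fin k → ℝ, α ≠ 0 → (∑ a, α a • w a) ⬝ᵥ (A *ᵥ (∑ a, α a • w a)) < 0) :
    k ≤ Nat.card {i : ι // hA.eigenvalues i < 0} := by
  classical
  rw [Nat.card_eq_fintype_card]
  by_contra h
  push_neg at h
  set r : Fin k → ({i : ι // hA.eigenvalues i < 0} → ℝ) :=
    fun a j => coords hA (w a) j.1 with hr
  have hnli : ¬ LinearIndependent ℝ r := by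
    intro hli
    have h2 := hli.fintype_card_le_finrank
    rw [Module.finrank_pi] at h2
    simp only [Fintype.card_fin] at h2
    omega
  obtain ⟨g, hg0, a0, ha0⟩ := Fintype.not_linearIndependent_iff.mp hnli
  have hgne : g ≠ 0 := fun h' => ha0 (by simp [h'])
  have hq := hw g hgne
  have hcoords : ∀ i : ι, hA.eigenvalues i < 0 → coords hA (∑ a, g a • w a) i = 0 := by
    intro i hi
    have h3 := congrFun hg0 ⟨i, hi⟩
    simp only [Finset.sum_apply, Pi.smul_apply, Pi.zero_apply, smul_eq_mul, hr] at h3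
    rw [coords_combo]
    exact h3
  have hle : 0 ≤ (∑ a, g a • w a) ⬝ᵥ (A *ᵥ (∑ a, g a • w a)) := by
    rw [qf_eq_sum hA]
    apply Finset.sum_nonneg
    intro i _
    by_cases hi : hA.eigenvalues i < 0
    · rw [hcoords i hi]; simp
    · push_neg at hi
      exact mul_nonneg hi (sq_nonneg _)
  linarith

lemma coords_col (j : ι) :
    coords hA ((hA.eigenvectorUnitary : Matrix ι ι ℝ) *ᵥ Pi.single j 1) = Pi.single j 1 := by
  rw [coords, Matrix.mulVec_mulVec]
  rw [show star (hA.eigenvectorUnitary : Matrix ι ι ℝ) * (hA.eigenvectorUnitary : Matrix ι ι ℝ) = 1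
    from (Matrix.mem_unitaryGroup_iff').mp hA.eigenvectorUnitary.2]
  rw [Matrix.one_mulVec]

lemma exists_pos_basis :
    ∃ w : Fin (Nat.card {i : ι // 0 < hA.eigenvalues i}) → ι → ℝ,
      ∀ α : Fin (Nat.card {i : ι // 0 < hA.eigenvalues i}) → ℝ, α ≠ 0 → 0 < (∑ a, α a • w a) ⬝ᵥ (A *ᵥ (∑ a, α a • w a)) := by
  classical
  set P := {i : ι // 0 < hA.eigenvalues i}
  have hcard : Nat.card P = Fintype.card P := Nat.card_eq_fintype_card
  set e : Fin (Nat.card P) ≃ P := (finCongr hcard).trans (Fintype.equivFin P).symm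
  set f : Fin (Nat.card P) → ι := fun a => (e a).1 with hf
  have hfinj : Function.Injective f := fun a b hab => by
    apply e.injective; exact Subtype.ext hab
  refine ⟨fun a => (hA.eigenvectorUnitary : Matrix ι ι ℝ) *ᵥ Pi.single (f a) 1, ?_⟩
  intro α hα
  rw [qf_eq_sum hA]
  have hc : ∀ i, coords hA (∑ a, α a • (hA.eigenvectorUnitary : Matrix ι ι ℝ) *ᵥ Pi.single (f a) 1) i
      = ∑ a, α a * (Pi.single (f a) 1 : ι → ℝ) i := by
    intro i
    rw [coords_combo hA]
    exact Finset.sum_congr rfl fun a _ => by rw [coords_col]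
  have hzero : ∀ i ∉ Finset.univ.image f,
      hA.eigenvalues i * (coords hA (∑ a, α a • (hA.eigenvectorUnitary : Matrix ι ι ℝ) *ᵥ Pi.single (f a) 1) i) ^ 2 = 0 := by
    intro i hi
    rw [hc]
    have : ∀ a : Fin (Nat.card P), α a * (Pi.single (f a) 1 : ι → ℝ) i = 0 := by
      intro a
      rw [Pi.single_eq_of_ne (fun h => hi (Finset.mem_image.mpr ⟨a, Finset.mem_univ a, h.symm⟩))]
      ring
    rw [Finset.sum_congr rfl fun a _ => this a]
    simp
  rw [← Finset.sum_subset (Finset.subset_univ (Finset.univ.image f)) (fun i _ hi => hzero i hi)]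
  rw [Finset.sum_image (fun a _ b _ h => hfinj h)]
  have hval : ∀ a, coords hA (∑ b, α b • (hA.eigenvectorUnitary : Matrix ι ι ℝ) *ᵥ Pi.single (f b) 1) (f a) = α a := by
    intro a
    rw [hc]
    rw [Finset.sum_eq_single a]
    · simp
    · intro b _ hba
      rw [Pi.single_eq_of_ne (fun h => hba (hfinj h).symm)]; ring
    · intro h; exact absurd (Finset.mem_univ a) h
  obtain ⟨a0, ha0⟩ : ∃ a, α a ≠ 0 := Function.ne_iff.mp hα
  apply Finset.sum_pos'
  · intro a _
    rw [hval]
    exact mul_nonneg (le_of_lt (e a).2) (sq_nonneg _)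
  · exact ⟨a0, Finset.mem_univ a0, by rw [hval]; exact mul_pos (e a0).2 (by positivity)⟩

lemma exists_neg_basis :
    ∃ w : Fin (Nat.card {i : ι // hA.eigenvalues i < 0}) → ι → ℝ,
      ∀ α : Fin (Nat.card {i : ι // hA.eigenvalues i < 0}) → ℝ, α ≠ 0 → (∑ a, α a • w a) ⬝ᵥ (A *ᵥ (∑ a, α a • w a)) < 0 := by
  classical
  set P := {i : ι // hA.eigenvalues i < 0}
  have hcard : Nat.card P = Fintype.card P := Nat.card_eq_fintype_card
  set e : Fin (Nat.card P) ≃ P := (finCongr hcard).trans (Fintype.equivFin P).symm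
  set f : Fin (Nat.card P) → ι := fun a => (e a).1 with hf
  have hfinj : Function.Injective f := fun a b hab => by
    apply e.injective; exact Subtype.ext hab
  refine ⟨fun a => (hA.eigenvectorUnitary : Matrix ι ι ℝ) *ᵥ Pi.single (f a) 1, ?_⟩
  intro α hα
  rw [qf_eq_sum hA]
  have hc : ∀ i, coords hA (∑ a, α a • (hA.eigenvectorUnitary : Matrix ι ι ℝ) *ᵥ Pi.single (f a) 1) i
      = ∑ a, α a * (Pi.single (f a) 1 : ι → ℝ) i := by
    intro i
    rw [coords_combo hA]
    exact Finset.sum_congr rfl fun a _ => by rw [coords_col]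
  have hzero : ∀ i ∉ Finset.univ.image f,
      hA.eigenvalues i * (coords hA (∑ a, α a • (hA.eigenvectorUnitary : Matrix ι ι ℝ) *ᵥ Pi.single (f a) 1) i) ^ 2 = 0 := by
    intro i hi
    rw [hc]
    have : ∀ a : Fin (Nat.card P), α a * (Pi.single (f a) 1 : ι → ℝ) i = 0 := by
      intro a
      rw [Pi.single_eq_of_ne (fun h => hi (Finset.mem_image.mpr ⟨a, Finset.mem_univ a, h.symm⟩))]
      ring
    rw [Finset.sum_congr rfl fun a _ => this a]
    simp
  rw [← Finset.sum_subset (Finset.subset_univ (Finset.univ.image f)) (fun i _ hi => hzero i hi)]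
  rw [Finset.sum_image (fun a _ b _ h => hfinj h)]
  have hval : ∀ a, coords hA (∑ b, α b • (hA.eigenvectorUnitary : Matrix ι ι ℝ) *ᵥ Pi.single (f b) 1) (f a) = α a := by
    intro a
    rw [hc]
    rw [Finset.sum_eq_single a]
    · simp
    · intro b _ hba
      rw [Pi.single_eq_of_ne (fun h => hba (hfinj h).symm)]; ring
    · intro h; exact absurd (Finset.mem_univ a) h
  obtain ⟨a0, ha0⟩ : ∃ a, α a ≠ 0 := Function.ne_iff.mp hα
  have : 0 < ∑ a, -(hA.eigenvalues (f a) * (coords hA (∑ b, α b • (hA.eigenvectorUnitary : Matrix ι ι ℝ) *ᵥ Pi.single (f b) 1) (f a)) ^ 2) := by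
    apply Finset.sum_pos'
    · intro a _
      rw [hval]
      have := (e a).2
      nlinarith [sq_nonneg (α a)]
    · refine ⟨a0, Finset.mem_univ a0, ?_⟩
      rw [hval]
      have := (e a0).2
      have h2 : 0 < (α a0)^2 := by positivity
      nlinarith
  rw [Finset.sum_neg_distrib] at this
  linarith

lemma card_sign_partition :
    Nat.card {i : ι // 0 < hA.eigenvalues i} + Nat.card {i : ι // hA.eigenvalues i < 0}
      + Nat.card {i : ι // hA.eigenvalues i = 0} = Fintype.card ι := by
  classical
  simp only [Nat.card_eq_fintype_card, Fintype.card_subtype]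
  have h1 := Finset.card_filter_add_card_filter_not (s := Finset.univ)
    (p := fun i => 0 < hA.eigenvalues i)
  have h2 := Finset.card_filter_add_card_filter_not
    (s := Finset.univ.filter (fun i => ¬ 0 < hA.eigenvalues i)) (p := fun i => hA.eigenvalues i < 0)
  rw [Finset.filter_filter, Finset.filter_filter] at h2
  have e1 : Finset.univ.filter (fun i => ¬ 0 < hA.eigenvalues i ∧ hA.eigenvalues i < 0)
      = Finset.univ.filter (fun i => hA.eigenvalues i < 0) := by
    apply Finset.filter_congr; intro i _; constructor
    · exact fun h => h.2
    · exact fun h => ⟨by linarith, h⟩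
  have e2 : Finset.univ.filter (fun i => ¬ 0 < hA.eigenvalues i ∧ ¬ hA.eigenvalues i < 0)
      = Finset.univ.filter (fun i => hA.eigenvalues i = 0) := by
    apply Finset.filter_congr; intro i _; constructor
    · intro h; linarith [h.1, h.2]
    · intro h; constructor <;> simp [h]
  rw [e1, e2] at h2
  rw [Finset.card_univ] at h1
  omega

lemma sum_dotProduct' {κ : Type*} (s : Finset κ) (f : κ → ι → ℝ) (v : ι → ℝ) :
    (∑ k ∈ s, f k) ⬝ᵥ v = ∑ k ∈ s, f k ⬝ᵥ v := by
  simp only [dotProduct, Finset.sum_apply, Finset.sum_mul]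
  exact Finset.sum_comm

lemma dotProduct_sum' {κ : Type*} (s : Finset κ) (v : ι → ℝ) (f : κ → ι → ℝ) :
    v ⬝ᵥ (∑ k ∈ s, f k) = ∑ k ∈ s, v ⬝ᵥ f k := by
  simp only [dotProduct, Finset.sum_apply, Finset.mul_sum]
  exact Finset.sum_comm

lemma mulVec_sum' {κ : Type*} (s : Finset κ) (A : Matrix ι ι ℝ) (f : κ → ι → ℝ) :
    A *ᵥ (∑ k ∈ s, f k) = ∑ k ∈ s, A *ᵥ f k := by
  have h := map_sum (Matrix.mulVecLin A) f s
  simp only [Matrix.mulVecLin_apply] at h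
  exact h

lemma quad_eval (A : Matrix ι ι ℝ) (p : Fin 6 → ι) (t : Fin 6 → ℝ) :
    (∑ k, t k • (Pi.single (p k) 1 : ι → ℝ)) ⬝ᵥ (A *ᵥ (∑ k, t k • (Pi.single (p k) 1 : ι → ℝ)))
      = ∑ k, ∑ l, t k * t l * A (p k) (p l) := by
  rw [mulVec_sum', sum_dotProduct']
  refine Finset.sum_congr rfl fun k _ => ?_
  rw [smul_dotProduct, dotProduct_sum', Finset.smul_sum]
  refine Finset.sum_congr rfl fun l _ => ?_
  rw [Matrix.mulVec_smul, dotProduct_smul, single_dotProduct, Matrix.mulVec_single_one]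
  simp only [smul_eq_mul, mul_one, Matrix.col_apply]
  ring

lemma combo_swap (p : Fin 6 → ι) (C : Fin 3 → Fin 6 → ℝ) (α : Fin 3 → ℝ) :
    ∑ a, α a • (∑ k, C a k • (Pi.single (p k) 1 : ι → ℝ))
      = ∑ k, (∑ a, α a * C a k) • (Pi.single (p k) 1 : ι → ℝ) := by
  simp only [Finset.smul_sum, smul_smul]
  rw [Finset.sum_comm]
  exact Finset.sum_congr rfl fun k _ => by rw [Finset.sum_smul]


section Adj
variable {ι : Type*} [Fintype ι] [DecidableEq ι] {G : SimpleGraph ι}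

lemma adjMat_of_adj {i j : ι} (h : G.Adj i j) : adjMat G i j = 1 := by
  unfold adjMat
  letI := Classical.decRel G.Adj
  rw [SimpleGraph.adjMatrix_apply, if_pos h]

lemma adjMat_of_not_adj {i j : ι} (h : ¬ G.Adj i j) : adjMat G i j = 0 := by
  unfold adjMat
  letI := Classical.decRel G.Adj
  rw [SimpleGraph.adjMatrix_apply, if_neg h]

lemma adjMat_diag (i : ι) : adjMat G i i = 0 := adjMat_of_not_adj G.irrefl

end Adj
end Spectral

lemma pos_quad_i (a b c : ℝ) (h : a ≠ 0 ∨ b ≠ 0 ∨ c ≠ 0) :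
    0 < 4*a^2 + 6*b^2 + 2*c^2 - 6*a*b + 4*a*c := by
  rcases h with h | h | h
  · have : 0 < a^2 := by positivity
    nlinarith [sq_nonneg (a + c), sq_nonneg (a - 2*b)]
  · have : 0 < b^2 := by positivity
    nlinarith [sq_nonneg (a + c), sq_nonneg (2*a - 3*b)]
  · have : 0 < c^2 := by positivity
    nlinarith [sq_nonneg (4*a - 3*b + 2*c), sq_nonneg (5*b + 2*c)]

lemma pos_quad_ii (a b c : ℝ) (h : a ≠ 0 ∨ b ≠ 0 ∨ c ≠ 0) :
    0 < 10*a^2 + 2*b^2 + 2*c^2 - 2*a*b + 8*a*c := by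
  rcases h with h | h | h
  · have : 0 < a^2 := by positivity
    nlinarith [sq_nonneg (c + 2*a), sq_nonneg (a - 2*b)]
  · have : 0 < b^2 := by positivity
    nlinarith [sq_nonneg (c + 2*a), sq_nonneg (2*a - b)]
  · have : 0 < c^2 := by positivity
    nlinarith [sq_nonneg (10*a - b + 4*c), sq_nonneg (19*b + 4*c)]

section Config
variable {ι : Type*} [Fintype ι] [DecidableEq ι]

/-- Forbidden configuration (i): the induced graph on `p0..p5` (playing roles
`v, x, x', y, y', y''`) has three positive eigenvalues. -/
lemma config_i (G : SimpleGraph ι)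
    (hp2 : Nat.card {i : ι // 0 < (adjMat_isHermitian G).eigenvalues i} ≤ 2)
    (p0 p1 p2 p3 p4 p5 : ι)
    (h01 : G.Adj p0 p1) (h02 : G.Adj p0 p2) (h12 : G.Adj p1 p2)
    (h13 : G.Adj p1 p3) (h15 : G.Adj p1 p5) (h24 : G.Adj p2 p4)
    (h34 : G.Adj p3 p4) (h35 : G.Adj p3 p5) (h45 : G.Adj p4 p5)
    (n03 : ¬ G.Adj p0 p3) (n04 : ¬ G.Adj p0 p4) (n05 : ¬ G.Adj p0 p5)
    (n14 : ¬ G.Adj p1 p4) (n23 : ¬ G.Adj p2 p3) (n25 : ¬ G.Adj p2 p5) :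
    False := by
  classical
  have key := le_card_pos (adjMat_isHermitian G) 3
    ![(-1:ℝ) • (Pi.single p0 1 : ι → ℝ) + (-1:ℝ) • (Pi.single p1 1 : ι → ℝ)
        + (-1:ℝ) • (Pi.single p3 1 : ι → ℝ) + (Pi.single p4 1 : ι → ℝ)
        + (-1:ℝ) • (Pi.single p5 1 : ι → ℝ),
      (-1:ℝ) • (Pi.single p0 1 : ι → ℝ) + (Pi.single p3 1 : ι → ℝ)
        + (Pi.single p4 1 : ι → ℝ) + (Pi.single p5 1 : ι → ℝ),
      (-1:ℝ) • (Pi.single p0 1 : ι → ℝ) + (-1:ℝ) • (Pi.single p2 1 : ι → ℝ)]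
  have hcontra : ¬ (3 ≤ Nat.card {i : ι // 0 < (adjMat_isHermitian G).eigenvalues i}) := by omega
  apply hcontra
  apply key
  intro α hα
  obtain ⟨a0, ha0⟩ : ∃ a, α a ≠ 0 := Function.ne_iff.mp hα
  have e01 : adjMat G p0 p1 = 1 := adjMat_of_adj h01
  have e10 : adjMat G p1 p0 = 1 := adjMat_of_adj h01.symm
  have e02 : adjMat G p0 p2 = 1 := adjMat_of_adj h02
  have e20 : adjMat G p2 p0 = 1 := adjMat_of_adj h02.symm
  have e12 : adjMat G p1 p2 = 1 := adjMat_of_adj h12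
  have e21 : adjMat G p2 p1 = 1 := adjMat_of_adj h12.symm
  have e13 : adjMat G p1 p3 = 1 := adjMat_of_adj h13
  have e31 : adjMat G p3 p1 = 1 := adjMat_of_adj h13.symm
  have e15 : adjMat G p1 p5 = 1 := adjMat_of_adj h15
  have e51 : adjMat G p5 p1 = 1 := adjMat_of_adj h15.symm
  have e24 : adjMat G p2 p4 = 1 := adjMat_of_adj h24
  have e42 : adjMat G p4 p2 = 1 := adjMat_of_adj h24.symm
  have e34 : adjMat G p3 p4 = 1 := adjMat_of_adj h34
  have e43 : adjMat G p4 p3 = 1 := adjMat_of_adj h34.symm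
  have e35 : adjMat G p3 p5 = 1 := adjMat_of_adj h35
  have e53 : adjMat G p5 p3 = 1 := adjMat_of_adj h35.symm
  have e45 : adjMat G p4 p5 = 1 := adjMat_of_adj h45
  have e54 : adjMat G p5 p4 = 1 := adjMat_of_adj h45.symm
  have f03 : adjMat G p0 p3 = 0 := adjMat_of_not_adj n03
  have f30 : adjMat G p3 p0 = 0 := adjMat_of_not_adj (fun h => n03 h.symm)
  have f04 : adjMat G p0 p4 = 0 := adjMat_of_not_adj n04
  have f40 : adjMat G p4 p0 = 0 := adjMat_of_not_adj (fun h => n04 h.symm)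
  have f05 : adjMat G p0 p5 = 0 := adjMat_of_not_adj n05
  have f50 : adjMat G p5 p0 = 0 := adjMat_of_not_adj (fun h => n05 h.symm)
  have f14 : adjMat G p1 p4 = 0 := adjMat_of_not_adj n14
  have f41 : adjMat G p4 p1 = 0 := adjMat_of_not_adj (fun h => n14 h.symm)
  have f23 : adjMat G p2 p3 = 0 := adjMat_of_not_adj n23
  have f32 : adjMat G p3 p2 = 0 := adjMat_of_not_adj (fun h => n23 h.symm)
  have f25 : adjMat G p2 p5 = 0 := adjMat_of_not_adj n25
  have f52 : adjMat G p5 p2 = 0 := adjMat_of_not_adj (fun h => n25 h.symm)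
  have d0 : adjMat G p0 p0 = 0 := adjMat_diag p0
  have d1 : adjMat G p1 p1 = 0 := adjMat_diag p1
  have d2 : adjMat G p2 p2 = 0 := adjMat_diag p2
  have d3 : adjMat G p3 p3 = 0 := adjMat_diag p3
  have d4 : adjMat G p4 p4 = 0 := adjMat_diag p4
  have d5 : adjMat G p5 p5 = 0 := adjMat_diag p5
  rw [Fin.sum_univ_three]
  simp only [Matrix.cons_val_zero, Matrix.cons_val_one, Matrix.head_cons,
    Matrix.cons_val_two, Matrix.tail_cons, smul_add, smul_smul, Matrix.mulVec_add, Matrix.mulVec_smul,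
    Matrix.mulVec_single_one, add_dotProduct, smul_dotProduct,
    dotProduct_add, dotProduct_smul, single_dotProduct,
    smul_eq_mul, mul_one, Matrix.col_apply]
  simp only [e01, e10, e02, e20, e12, e21, e13, e31, e15, e51, e24, e42, e34, e43,
    e35, e53, e45, e54, f03, f30, f04, f40, f05, f50, f14, f41, f23, f32, f25, f52,
    d0, d1, d2, d3, d4, d5]
  have hcase : α 0 ≠ 0 ∨ α 1 ≠ 0 ∨ α 2 ≠ 0 := by
    fin_cases a0
    · exact Or.inl ha0
    · exact Or.inr (Or.inl ha0)
    · exact Or.inr (Or.inr ha0)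
  have hq := pos_quad_i (α 0) (α 1) (α 2) hcase
  ring_nf
  ring_nf at hq
  linarith only [hq]

/-- Forbidden configuration (ii): roles `v, x, x', z, y, y'`. -/
lemma config_ii (G : SimpleGraph ι)
    (hp2 : Nat.card {i : ι // 0 < (adjMat_isHermitian G).eigenvalues i} ≤ 2)
    (p0 p1 p2 p3 p4 p5 : ι)
    (h01 : G.Adj p0 p1) (h02 : G.Adj p0 p2) (h03 : G.Adj p0 p3)
    (h12 : G.Adj p1 p2) (h13 : G.Adj p1 p3) (h23 : G.Adj p2 p3)
    (h14 : G.Adj p1 p4) (h25 : G.Adj p2 p5) (h34 : G.Adj p3 p4) (h45 : G.Adj p4 p5)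
    (n04 : ¬ G.Adj p0 p4) (n05 : ¬ G.Adj p0 p5) (n15 : ¬ G.Adj p1 p5)
    (n24 : ¬ G.Adj p2 p4) (n35 : ¬ G.Adj p3 p5) :
    False := by
  classical
  have key := le_card_pos (adjMat_isHermitian G) 3
    ![(Pi.single p1 1 : ι → ℝ) + (Pi.single p2 1 : ι → ℝ) + (2:ℝ) • (Pi.single p3 1 : ι → ℝ),
      (-1:ℝ) • (Pi.single p0 1 : ι → ℝ) + (-1:ℝ) • (Pi.single p2 1 : ι → ℝ)
        + (2:ℝ) • (Pi.single p4 1 : ι → ℝ),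
      (Pi.single p2 1 : ι → ℝ) + (Pi.single p5 1 : ι → ℝ)]
  have hcontra : ¬ (3 ≤ Nat.card {i : ι // 0 < (adjMat_isHermitian G).eigenvalues i}) := by omega
  apply hcontra
  apply key
  intro α hα
  obtain ⟨a0, ha0⟩ : ∃ a, α a ≠ 0 := Function.ne_iff.mp hα
  have e01 : adjMat G p0 p1 = 1 := adjMat_of_adj h01
  have e10 : adjMat G p1 p0 = 1 := adjMat_of_adj h01.symm
  have e02 : adjMat G p0 p2 = 1 := adjMat_of_adj h02
  have e20 : adjMat G p2 p0 = 1 := adjMat_of_adj h02.symm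
  have e03 : adjMat G p0 p3 = 1 := adjMat_of_adj h03
  have e30 : adjMat G p3 p0 = 1 := adjMat_of_adj h03.symm
  have e12 : adjMat G p1 p2 = 1 := adjMat_of_adj h12
  have e21 : adjMat G p2 p1 = 1 := adjMat_of_adj h12.symm
  have e13 : adjMat G p1 p3 = 1 := adjMat_of_adj h13
  have e31 : adjMat G p3 p1 = 1 := adjMat_of_adj h13.symm
  have e23 : adjMat G p2 p3 = 1 := adjMat_of_adj h23
  have e32 : adjMat G p3 p2 = 1 := adjMat_of_adj h23.symm
  have e14 : adjMat G p1 p4 = 1 := adjMat_of_adj h14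
  have e41 : adjMat G p4 p1 = 1 := adjMat_of_adj h14.symm
  have e25 : adjMat G p2 p5 = 1 := adjMat_of_adj h25
  have e52 : adjMat G p5 p2 = 1 := adjMat_of_adj h25.symm
  have e34 : adjMat G p3 p4 = 1 := adjMat_of_adj h34
  have e43 : adjMat G p4 p3 = 1 := adjMat_of_adj h34.symm
  have e45 : adjMat G p4 p5 = 1 := adjMat_of_adj h45
  have e54 : adjMat G p5 p4 = 1 := adjMat_of_adj h45.symm
  have f04 : adjMat G p0 p4 = 0 := adjMat_of_not_adj n04
  have f40 : adjMat G p4 p0 = 0 := adjMat_of_not_adj (fun h => n04 h.symm)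
  have f05 : adjMat G p0 p5 = 0 := adjMat_of_not_adj n05
  have f50 : adjMat G p5 p0 = 0 := adjMat_of_not_adj (fun h => n05 h.symm)
  have f15 : adjMat G p1 p5 = 0 := adjMat_of_not_adj n15
  have f51 : adjMat G p5 p1 = 0 := adjMat_of_not_adj (fun h => n15 h.symm)
  have f24 : adjMat G p2 p4 = 0 := adjMat_of_not_adj n24
  have f42 : adjMat G p4 p2 = 0 := adjMat_of_not_adj (fun h => n24 h.symm)
  have f35 : adjMat G p3 p5 = 0 := adjMat_of_not_adj n35
  have f53 : adjMat G p5 p3 = 0 := adjMat_of_not_adj (fun h => n35 h.symm)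
  have d0 : adjMat G p0 p0 = 0 := adjMat_diag p0
  have d1 : adjMat G p1 p1 = 0 := adjMat_diag p1
  have d2 : adjMat G p2 p2 = 0 := adjMat_diag p2
  have d3 : adjMat G p3 p3 = 0 := adjMat_diag p3
  have d4 : adjMat G p4 p4 = 0 := adjMat_diag p4
  have d5 : adjMat G p5 p5 = 0 := adjMat_diag p5
  rw [Fin.sum_univ_three]
  simp only [Matrix.cons_val_zero, Matrix.cons_val_one, Matrix.head_cons,
    Matrix.cons_val_two, Matrix.tail_cons, smul_add, smul_smul, Matrix.mulVec_add,
    Matrix.mulVec_smul, Matrix.mulVec_single_one, add_dotProduct, smul_dotProduct,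
    dotProduct_add, dotProduct_smul, single_dotProduct,
    smul_eq_mul, mul_one, Matrix.col_apply]
  simp only [e01, e10, e02, e20, e03, e30, e12, e21, e13, e31, e23, e32, e14, e41,
    e25, e52, e34, e43, e45, e54, f04, f40, f05, f50, f15, f51, f24, f42, f35, f53,
    d0, d1, d2, d3, d4, d5]
  have hcase : α 0 ≠ 0 ∨ α 1 ≠ 0 ∨ α 2 ≠ 0 := by
    fin_cases a0
    · exact Or.inl ha0
    · exact Or.inr (Or.inl ha0)
    · exact Or.inr (Or.inr ha0)
  have hq := pos_quad_ii (α 0) (α 1) (α 2) hcase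
  ring_nf
  ring_nf at hq
  linarith only [hq]

end Config

section Deletion
variable {ι : Type*} [Fintype ι] [DecidableEq ι]

lemma adjMat_induce (G : SimpleGraph ι) (s : Set ι)
    (iF : Fintype ↥s) (iD : DecidableEq ↥s) :
    @adjMat ↥s iF iD (G.induce s)
      = (adjMat G).submatrix (Subtype.val) (Subtype.val) := by
  ext i j
  unfold adjMat
  simp only [Matrix.submatrix_apply]
  letI := Classical.decRel G.Adj
  letI := Classical.decRel (G.induce s).Adj
  rw [SimpleGraph.adjMatrix_apply, SimpleGraph.adjMatrix_apply]
  congr 1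

/-- removing a vertex supporting a kernel vector: positive and negative counts survive -/
lemma deletion (G : SimpleGraph ι) (z : ι) (w : ι → ℝ)
    (hker : adjMat G *ᵥ w = 0) (hwz : w z ≠ 0)
    (s : Set ι) (hcompl : ∀ i, i ∉ s ↔ i = z)
    (iF : Fintype ↥s) (iD : DecidableEq ↥s) :
    Nat.card {i // 0 < (@adjMat_isHermitian _ iF iD (G.induce s)).eigenvalues i}
        = Nat.card {i : ι // 0 < (adjMat_isHermitian G).eigenvalues i}
    ∧ Nat.card {i // (@adjMat_isHermitian _ iF iD (G.induce s)).eigenvalues i < 0}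
        = Nat.card {i : ι // (adjMat_isHermitian G).eigenvalues i < 0} := by
  classical
  have hBsub : @adjMat ↥s iF iD (G.induce s)
      = (adjMat G).submatrix (Subtype.val) (Subtype.val) := adjMat_induce G s iF iD
  have hsymm : (adjMat G)ᵀ = adjMat G := by
    have h := adjMat_isHermitian G
    rwa [Matrix.IsHermitian, Matrix.conjTranspose_eq_transpose_of_trivial] at h
  set ext : (↥s → ℝ) → ι → ℝ :=
    fun f i => if h : i ∈ s then f ⟨i, h⟩ else 0 with hext
  have ext_combo : ∀ (k : ℕ) (α : Fin k → ℝ) (f : Fin k → ↥s → ℝ),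
      ∑ a, α a • ext (f a) = ext (∑ a, α a • f a) := by
    intro k α f
    funext i
    by_cases h : i ∈ s <;> simp [hext, h, Finset.sum_apply]
  have sum_ext0 : ∀ F : ι → ℝ, (∀ j ∉ s, F j = 0) → ∑ j, F j = ∑ j : ↥s, F ↑j := by
    intro F hF
    rw [← Finset.sum_filter_of_ne (p := fun j => j ∈ s)
      (fun x _ hx => by by_contra hmem; exact hx (hF x hmem))]
    exact Finset.sum_subtype _ (fun x => by simp) F
  have dot_ext : ∀ f : ↥s → ℝ,
      ext f ⬝ᵥ (adjMat G *ᵥ ext f)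
        = f ⬝ᵥ ((adjMat G).submatrix (Subtype.val) (Subtype.val) *ᵥ f) := by
    intro f
    have hzero : ∀ j ∉ s, ext f j * (adjMat G *ᵥ ext f) j = 0 := by
      intro j hj; simp [hext, hj]
    rw [show ext f ⬝ᵥ (adjMat G *ᵥ ext f)
        = ∑ j, ext f j * (adjMat G *ᵥ ext f) j from rfl]
    rw [sum_ext0 _ hzero]
    refine Finset.sum_congr rfl fun j _ => ?_
    have h1 : ext f ↑j = f j := by simp [hext, j.2]
    have h2 : (adjMat G *ᵥ ext f) ↑j
        = ((adjMat G).submatrix (Subtype.val) (Subtype.val) *ᵥ f) j := by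
      show ∑ l, adjMat G ↑j l * ext f l = ∑ l : ↥s, adjMat G ↑j ↑l * f l
      rw [sum_ext0 (fun l => adjMat G ↑j l * ext f l)
        (fun l hl => by simp [hext, hl])]
      refine Finset.sum_congr rfl fun l _ => ?_
      simp [hext, l.2]
    rw [h1, h2]
  have qf_sub_kernel : ∀ (x : ι → ℝ) (c : ℝ),
      (x - c • w) ⬝ᵥ (adjMat G *ᵥ (x - c • w)) = x ⬝ᵥ (adjMat G *ᵥ x) := by
    intro x c
    have hAx : adjMat G *ᵥ (x - c • w) = adjMat G *ᵥ x := by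
      rw [Matrix.mulVec_sub, Matrix.mulVec_smul, hker]
      simp
    rw [hAx, sub_dotProduct, smul_dotProduct]
    have hwAx : w ⬝ᵥ (adjMat G *ᵥ x) = 0 := by
      rw [Matrix.dotProduct_mulVec, ← Matrix.mulVec_transpose, hsymm, hker]
      simp
    rw [hwAx]
    simp
  have restrict_side : ∀ (wA : ι → ℝ),
      True := fun _ => trivial
  constructor
  · apply le_antisymm
    · obtain ⟨wB, hwB⟩ := @exists_pos_basis ↥s iF iD _ (@adjMat_isHermitian _ iF iD (G.induce s))
      apply le_card_pos (adjMat_isHermitian G) _ (fun a => ext (wB a))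
      intro α hα
      rw [ext_combo, dot_ext, ← hBsub]
      exact hwB α hα
    · obtain ⟨wA, hwA⟩ := exists_pos_basis (adjMat_isHermitian G)
      apply @le_card_pos ↥s iF iD _ (@adjMat_isHermitian _ iF iD (G.induce s)) _
        (fun a => fun j : ↥s => (wA a - ((wA a z) * (w z)⁻¹) • w) ↑j)
      intro α hα
      set u : _ → ι → ℝ := fun a => wA a - ((wA a z) * (w z)⁻¹) • w with hu
      have hcombo : (∑ a, α a • fun j : ↥s => u a ↑j) = fun j : ↥s => (∑ a, α a • u a) ↑j := by
        funext j; simp [Finset.sum_apply]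
      have hz0 : (∑ a, α a • u a) z = 0 := by
        rw [Finset.sum_apply]
        apply Finset.sum_eq_zero
        intro a _
        simp only [Pi.smul_apply, hu, Pi.sub_apply, smul_eq_mul]
        field_simp
        ring
      have hextu : ext (fun j : ↥s => (∑ a, α a • u a) ↑j) = ∑ a, α a • u a := by
        funext i
        by_cases h : i ∈ s
        · simp [hext, h]
        · have hiz : i = z := (hcompl i).mp h
          simp only [hext, dif_neg h]
          rw [hiz, hz0]
      rw [hcombo]
      rw [hBsub, ← dot_ext, hextu]
      have hsplit : ∑ a, α a • u a
          = (∑ a, α a • wA a) - (∑ a, α a * (wA a z * (w z)⁻¹)) • w := by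
        simp only [hu, smul_sub, smul_smul, Finset.sum_sub_distrib, Finset.sum_smul]
      rw [hsplit, qf_sub_kernel]
      exact hwA α hα
  · apply le_antisymm
    · obtain ⟨wB, hwB⟩ := @exists_neg_basis ↥s iF iD _ (@adjMat_isHermitian _ iF iD (G.induce s))
      apply le_card_neg (adjMat_isHermitian G) _ (fun a => ext (wB a))
      intro α hα
      rw [ext_combo, dot_ext, ← hBsub]
      exact hwB α hα
    · obtain ⟨wA, hwA⟩ := exists_neg_basis (adjMat_isHermitian G)
      apply @le_card_neg ↥s iF iD _ (@adjMat_isHermitian _ iF iD (G.induce s)) _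
        (fun a => fun j : ↥s => (wA a - ((wA a z) * (w z)⁻¹) • w) ↑j)
      intro α hα
      set u : _ → ι → ℝ := fun a => wA a - ((wA a z) * (w z)⁻¹) • w with hu
      have hcombo : (∑ a, α a • fun j : ↥s => u a ↑j) = fun j : ↥s => (∑ a, α a • u a) ↑j := by
        funext j; simp [Finset.sum_apply]
      have hz0 : (∑ a, α a • u a) z = 0 := by
        rw [Finset.sum_apply]
        apply Finset.sum_eq_zero
        intro a _
        simp only [Pi.smul_apply, hu, Pi.sub_apply, smul_eq_mul]
        field_simp
        ring
      have hextu : ext (fun j : ↥s => (∑ a, α a • u a) ↑j) = ∑ a, α a • u a := by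
        funext i
        by_cases h : i ∈ s
        · simp [hext, h]
        · have hiz : i = z := (hcompl i).mp h
          simp only [hext, dif_neg h]
          rw [hiz, hz0]
      rw [hcombo]
      rw [hBsub, ← dot_ext, hextu]
      have hsplit : ∑ a, α a • u a
          = (∑ a, α a • wA a) - (∑ a, α a * (wA a z * (w z)⁻¹)) • w := by
        simp only [hu, smul_sub, smul_smul, Finset.sum_sub_distrib, Finset.sum_smul]
      rw [hsplit, qf_sub_kernel]
      exact hwA α hα

end Deletion

/-- The eigenvalues of (the adjacency matrix of) a graph, as a function on vertices. -/
noncomputable def eigs [Fintype V] [DecidableEq V] (G : SimpleGraph V) : V → ℝ :=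
  (adjMat_isHermitian G).eigenvalues

/-- `p(G)`: the number of positive eigenvalues (with multiplicity). -/
noncomputable def posCount [Finite V] (G : SimpleGraph V) : ℕ :=
  letI := Fintype.ofFinite V
  letI := Classical.decEq V
  Nat.card {i : V // 0 < eigs G i}

/-- `η(G)`: the number of zero eigenvalues (with multiplicity), the nullity. -/
noncomputable def nullCount [Finite V] (G : SimpleGraph V) : ℕ :=
  letI := Fintype.ofFinite V
  letI := Classical.decEq V
  Nat.card {i : V // eigs G i = 0}

/-- `λ_k(G)`: the `k`-th largest eigenvalue (1-indexed); junk value `0` out of range. -/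
noncomputable def lam [Finite V] (G : SimpleGraph V) (k : ℕ) : ℝ :=
  letI := Fintype.ofFinite V
  letI := Classical.decEq V
  (((Finset.univ.val.map (eigs G)).sort (· ≤ ·)).reverse).getD (k - 1) 0

/-- Membership in `𝒢^s(n)` (the order `n` being the cardinality of the vertex type):
`p(G) = 2` and `η(G) = s`. -/
def memClass [Finite V] (s : ℕ) (G : SimpleGraph V) : Prop :=
  posCount G = 2 ∧ nullCount G = s

/-- `v` is a congruent vertex of I-type: some other vertex `u`, non-adjacent to `v`,
has the same neighbourhood. -/
def ITypeVertex (G : SimpleGraph V) (v : V) : Prop :=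
  ∃ u, u ≠ v ∧ ¬ G.Adj u v ∧ G.neighborSet u = G.neighborSet v

/-- `u` is a congruent vertex of II-type: there are two non-adjacent vertices `v, w`
such that `N(u)` is a disjoint union of `N(v)` and `N(w)`. -/
def IITypeVertex (G : SimpleGraph V) (u : V) : Prop :=
  ∃ v w, v ≠ w ∧ ¬ G.Adj v w ∧ Disjoint (G.neighborSet v) (G.neighborSet w) ∧
    G.neighborSet u = G.neighborSet v ∪ G.neighborSet w

/-- `u v x y` is a congruent (induced) quadrangle with congruent edges `uv`, `xy`. -/
def CongruentQuad (G : SimpleGraph V) (u v x y : V) : Prop :=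
  u ≠ v ∧ u ≠ x ∧ u ≠ y ∧ v ≠ x ∧ v ≠ y ∧ x ≠ y ∧
  G.Adj u v ∧ G.Adj v x ∧ G.Adj x y ∧ G.Adj y u ∧ ¬ G.Adj u x ∧ ¬ G.Adj v y ∧
  G.neighborSet u \ {y, v} = G.neighborSet v \ {u, x} ∧
  G.neighborSet x \ {v, y} = G.neighborSet y \ {x, u}

/-- A congruent vertex of III-type: a vertex of some congruent quadrangle. -/
def IIITypeVertex (G : SimpleGraph V) (z : V) : Prop :=
  ∃ u v x y, CongruentQuad G u v x y ∧ (z = u ∨ z = v ∨ z = x ∨ z = y)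

/-- Membership in `𝒢_1^s(n)`: a connected graph obtained by adding a congruent vertex
of I-type to some graph in `𝒢^{s-1}(n-1)`. -/
def memG1 {n : ℕ} (s : ℕ) (G : SimpleGraph (Fin n)) : Prop :=
  G.Connected ∧ ∃ v : Fin n, ITypeVertex G v ∧ memClass (s - 1) (G.induce {v}ᶜ)

/-- Membership in `𝒢_2^s(n)`. -/
def memG2 {n : ℕ} (s : ℕ) (G : SimpleGraph (Fin n)) : Prop :=
  G.Connected ∧ ∃ v : Fin n, IITypeVertex G v ∧ memClass (s - 1) (G.induce {v}ᶜ)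

/-- Membership in `𝒢_3^s(n)`. -/
def memG3 {n : ℕ} (s : ℕ) (G : SimpleGraph (Fin n)) : Prop :=
  G.Connected ∧ ∃ v : Fin n, IIITypeVertex G v ∧ memClass (s - 1) (G.induce {v}ᶜ)

/-- Oboudi's graph `G_m`: two cliques `K_{⌈m/2⌉}` (on `v_1, …`) and `K_{⌊m/2⌋}`
(on `w_1, …`), where `v_i ∼ w_j` iff `j ≥ ⌊m/2⌋ - i + 2` (1-indexed), i.e. (0-indexed)
`⌊m/2⌋ ≤ i + j`. -/
def oboudi (m : ℕ) : SimpleGraph (Fin ((m + 1) / 2) ⊕ Fin (m / 2)) :=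
  SimpleGraph.fromRel fun a b =>
    match a, b with
    | Sum.inl _, Sum.inl _ => True
    | Sum.inr _, Sum.inr _ => True
    | Sum.inl i, Sum.inr j => m / 2 ≤ (i : ℕ) + (j : ℕ)
    | Sum.inr _, Sum.inl _ => False

/-- The generalized lexicographic product `G[K_{t v}]`: each vertex `v` is replaced by a
clique of order `t v`, with complete joins along edges of `G`. -/
def lexProd (G : SimpleGraph V) (t : V → ℕ) : SimpleGraph (Σ v : V, Fin (t v)) :=
  SimpleGraph.fromRel fun a b => a.1 = b.1 ∨ G.Adj a.1 b.1

/-- Index conversion identifying the vertices `v_1, …, v_{⌈k/2⌉}, w_1, …, w_{⌊k/2⌋}`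
of `G_k` with `Fin k` (in this order). -/
def toIdx {k : ℕ} : Fin ((k + 1) / 2) ⊕ Fin (k / 2) → Fin k
  | Sum.inl i => ⟨(i : ℕ), by have := i.isLt; omega⟩
  | Sum.inr j => ⟨(k + 1) / 2 + (j : ℕ), by have := j.isLt; omega⟩

/-- `B_k(n_1, …, n_k) = G_k[K_{n_1}, …, K_{n_k}]`. -/
def bGraph (k : ℕ) (nn : Fin k → ℕ) :
    SimpleGraph (Σ v : Fin ((k + 1) / 2) ⊕ Fin (k / 2), Fin (nn (toIdx v))) :=
  lexProd (oboudi k) fun v => nn (toIdx v)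

/-- Membership in `𝓓* = {B_k(n_1,…,n_k) ∈ 𝓑_k^{00}(n) : 4 ≤ k ≤ 14, n ≤ 14}` (up to
isomorphism). -/
def memDstar {n : ℕ} (G : SimpleGraph (Fin n)) : Prop :=
  ∃ (k : ℕ) (nn : Fin k → ℕ), 4 ≤ k ∧ k ≤ 14 ∧ (∀ i, 1 ≤ nn i) ∧ (∑ i, nn i) ≤ 14 ∧
    lam (bGraph k nn) 3 = 0 ∧ lam (bGraph k nn) 4 = 0 ∧ Nonempty (G ≃g bGraph k nn)

/-- The degree of a vertex. -/
noncomputable def deg [Finite V] (G : SimpleGraph V) (v : V) : ℕ :=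
  Nat.card (G.neighborSet v)

/-- `v` is a vertex of minimum degree. -/
def IsMinDegVertex [Finite V] (G : SimpleGraph V) (v : V) : Prop :=
  ∀ w, deg G v ≤ deg G w

/-- The set `Y = V(G) ∖ N[v]`. -/
def Yset (G : SimpleGraph V) (v : V) : Set V :=
  (G.neighborSet v ∪ {v})ᶜ

/-- `G` is `X`-complete with respect to `v`: `G[Y] ≅ K_{n-t-1}` with `n-t-1 ≥ 2`
and `G[X]` is complete, where `X = N(v)`, `Y = V(G) ∖ N[v]`. -/
def IsXComplete [Finite V] (G : SimpleGraph V) (v : V) : Prop :=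
  2 ≤ (Yset G v).ncard ∧ (Yset G v).Pairwise G.Adj ∧ (G.neighborSet v).Pairwise G.Adj

/-- An `X`-complete graph is reduced when the traces on `Y` of the neighbourhoods of
vertices of `X` form a chain. -/
def IsReduced (G : SimpleGraph V) (v : V) : Prop :=
  ∀ x ∈ G.neighborSet v, ∀ x' ∈ G.neighborSet v,
    G.neighborSet x ∩ Yset G v ⊆ G.neighborSet x' ∩ Yset G v ∨
    G.neighborSet x' ∩ Yset G v ⊆ G.neighborSet x ∩ Yset G v


section Irrel
variable {κ : Type*}

lemma card_pos_irrel (i1 : Fintype κ) (d1 : DecidableEq κ) (i2 : Fintype κ)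
    (d2 : DecidableEq κ) (G : SimpleGraph κ) :
    Nat.card {i // 0 < @eigs κ i1 d1 G i} = Nat.card {i // 0 < @eigs κ i2 d2 G i} := by
  obtain rfl : i1 = i2 := Subsingleton.elim _ _
  obtain rfl : d1 = d2 := funext fun a => funext fun b => Subsingleton.elim _ _
  rfl

lemma card_neg_irrel (i1 : Fintype κ) (d1 : DecidableEq κ) (i2 : Fintype κ)
    (d2 : DecidableEq κ) (G : SimpleGraph κ) :
    Nat.card {i // @eigs κ i1 d1 G i < 0} = Nat.card {i // @eigs κ i2 d2 G i < 0} := by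
  obtain rfl : i1 = i2 := Subsingleton.elim _ _
  obtain rfl : d1 = d2 := funext fun a => funext fun b => Subsingleton.elim _ _
  rfl

lemma card_zero_irrel (i1 : Fintype κ) (d1 : DecidableEq κ) (i2 : Fintype κ)
    (d2 : DecidableEq κ) (G : SimpleGraph κ) :
    Nat.card {i // @eigs κ i1 d1 G i = 0} = Nat.card {i // @eigs κ i2 d2 G i = 0} := by
  obtain rfl : i1 = i2 := Subsingleton.elim _ _
  obtain rfl : d1 = d2 := funext fun a => funext fun b => Subsingleton.elim _ _
  rfl

end Irrel

theorem nonreduced_Xcomplete_in_G3 {n s : ℕ} (hs : 2 ≤ s) (hsn : s ≤ n - 3)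
    (G : SimpleGraph (Fin n)) (hconn : G.Connected) (hG : memClass s G)
    (v : Fin n) (hv : IsMinDegVertex G v)
    (X Y : Set (Fin n)) (hX : X = G.neighborSet v) (hY : Y = Yset G v)
    (hXc : IsXComplete G v)
    (x x' : Fin n) (hx : x ∈ X) (hx' : x' ∈ X)
    (h1 : ((G.neighborSet x ∩ Y) \ (G.neighborSet x' ∩ Y)).Nonempty)
    (h2 : ((G.neighborSet x' ∩ Y) \ (G.neighborSet x ∩ Y)).Nonempty) :
    memG3 s G := by
  classical
  subst hX hY
  obtain ⟨hp, hz⟩ := hG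
  obtain ⟨y, hy⟩ := h1
  obtain ⟨y', hy'⟩ := h2
  -- basic unpacking
  have hyNx : G.Adj x y := hy.1.1
  have hyY : y ∈ Yset G v := hy.1.2
  have hynx' : ¬ G.Adj x' y := fun h => hy.2 ⟨h, hyY⟩
  have hy'Nx' : G.Adj x' y' := hy'.1.1
  have hy'Y : y' ∈ Yset G v := hy'.1.2
  have hy'nx : ¬ G.Adj x y' := fun h => hy'.2 ⟨h, hy'Y⟩
  have hvx : G.Adj v x := hx
  have hvx' : G.Adj v x' := hx'
  have hYpair : (Yset G v).Pairwise G.Adj := hXc.2.1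
  have hXpair : (G.neighborSet v).Pairwise G.Adj := hXc.2.2
  have hYnotadj : ∀ u ∈ Yset G v, ¬ G.Adj v u ∧ u ≠ v := by
    intro u hu
    simp only [Yset, Set.mem_compl_iff, Set.mem_union, SimpleGraph.mem_neighborSet,
      Set.mem_singleton_iff] at hu
    push_neg at hu
    exact hu
  have hXYdisj : ∀ a ∈ G.neighborSet v, a ∉ Yset G v := by
    intro a ha hay
    simp only [Yset, Set.mem_compl_iff, Set.mem_union] at hay
    exact hay (Or.inl ha)
  have hnyv : ¬ G.Adj v y := (hYnotadj y hyY).1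
  have hny'v : ¬ G.Adj v y' := (hYnotadj y' hy'Y).1
  have hxx' : x ≠ x' := fun h => hynx' (h ▸ hyNx)
  have hyy' : y ≠ y' := fun h => hy'nx (h ▸ hyNx)
  have hadjxx' : G.Adj x x' := hXpair hx hx' hxx'
  have hadjyy' : G.Adj y y' := hYpair hyY hy'Y hyy'
  have hxny : x ≠ y := hyNx.ne
  have hx'ny' : x' ≠ y' := hy'Nx'.ne
  have hxny' : x ≠ y' := fun h => hXYdisj x hx (h ▸ hy'Y)
  have hx'ny : x' ≠ y := fun h => hXYdisj x' hx' (h ▸ hyY)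
  -- eigenvalue counts for G (in the instances used by posCount/nullCount)
  have hp0 : Nat.card {i : Fin n //
      0 < @eigs (Fin n) (Fintype.ofFinite (Fin n)) (Classical.decEq (Fin n)) G i} = 2 := hp
  have hz0 : Nat.card {i : Fin n //
      @eigs (Fin n) (Fintype.ofFinite (Fin n)) (Classical.decEq (Fin n)) G i = 0} = s := hz
  have hp2 : Nat.card {i : Fin n // 0 < eigs G i} = 2 := by
    rw [← hp0]
    exact card_pos_irrel _ _ _ _ G
  have hz2 : Nat.card {i : Fin n // eigs G i = 0} = s := by
    rw [← hz0]
    exact card_zero_irrel _ _ _ _ G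
  have hple : Nat.card {i : Fin n // 0 < eigs G i} ≤ 2 := le_of_eq hp2
  -- trichotomy
  have htri : ∀ u : Fin n, u = v ∨ u ∈ G.neighborSet v ∨ u ∈ Yset G v := by
    intro u
    by_cases h1a : u = v
    · exact Or.inl h1a
    by_cases h2a : G.Adj v u
    · exact Or.inr (Or.inl h2a)
    · refine Or.inr (Or.inr ?_)
      simp only [Yset, Set.mem_compl_iff, Set.mem_union, SimpleGraph.mem_neighborSet,
        Set.mem_singleton_iff]
      push_neg
      exact ⟨h2a, h1a⟩
  -- Claim (i)
  have hI : ∀ u ∈ Yset G v, u ≠ y → u ≠ y' → (G.Adj u x ↔ G.Adj u x') := by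
    intro u huY huy huy'
    have hadjyu : G.Adj y u := hYpair hyY huY (Ne.symm huy)
    have hadjy'u : G.Adj y' u := hYpair hy'Y huY (Ne.symm huy')
    have hnvu : ¬ G.Adj v u := (hYnotadj u huY).1
    constructor
    · intro hux
      by_contra hux'
      exact config_i G hple
        v x x' y y' u hvx hvx' hadjxx' hyNx hux.symm hy'Nx' hadjyy' hadjyu hadjy'u
        hnyv hny'v hnvu hy'nx hynx' (fun h => hux' h.symm)
    · intro hux'
      by_contra hux
      exact config_i G hple
        v x' x y' y u hvx' hvx hadjxx'.symm hy'Nx' hux'.symm hyNx hadjyy'.symm hadjy'u hadjyu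
        hny'v hnyv hnvu hynx' hy'nx (fun h => hux h.symm)
  -- Claim (ii)
  have hII : ∀ z ∈ G.neighborSet v, z ≠ x → z ≠ x' → (G.Adj z y ↔ G.Adj z y') := by
    intro z hzX hzx hzx'
    have hvz : G.Adj v z := hzX
    have hadjxz : G.Adj x z := hXpair hx hzX (Ne.symm hzx)
    have hadjx'z : G.Adj x' z := hXpair hx' hzX (Ne.symm hzx')
    constructor
    · intro hzy
      by_contra hzy'
      exact config_ii G hple
        v x x' z y y' hvx hvx' hvz hadjxx' hadjxz hadjx'z hyNx hy'Nx' hzy hadjyy'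
        hnyv hny'v hy'nx hynx' hzy'
    · intro hzy'
      by_contra hzy
      exact config_ii G hple
        v x' x z y' y hvx' hvx hvz hadjxx'.symm hadjx'z hadjxz hy'Nx' hyNx hzy' hadjyy'.symm
        hny'v hnyv hynx' hy'nx hzy
  -- the kernel vector
  set w0 : Fin n → ℝ :=
    (Pi.single x 1 : Fin n → ℝ) - Pi.single x' 1 + Pi.single y 1 - Pi.single y' 1 with hw0
  have hval : ∀ i : Fin n,
      adjMat G i x - adjMat G i x' + adjMat G i y - adjMat G i y' = 0 := by
    intro i
    by_cases hix : i = x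
    · subst hix
      rw [adjMat_diag, adjMat_of_adj hadjxx', adjMat_of_adj hyNx, adjMat_of_not_adj hy'nx]
      ring
    by_cases hix' : i = x'
    · subst hix'
      rw [adjMat_diag, adjMat_of_adj hadjxx'.symm, adjMat_of_not_adj hynx',
        adjMat_of_adj hy'Nx']
      ring
    by_cases hiy : i = y
    · subst hiy
      rw [adjMat_diag, adjMat_of_adj hyNx.symm, adjMat_of_not_adj (fun h => hynx' h.symm),
        adjMat_of_adj hadjyy']
      ring
    by_cases hiy' : i = y'
    · subst hiy'
      rw [adjMat_diag, adjMat_of_not_adj (fun h => hy'nx h.symm),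
        adjMat_of_adj hy'Nx'.symm, adjMat_of_adj hadjyy'.symm]
      ring
    rcases htri i with hiv | hiX | hiY
    · subst hiv
      rw [adjMat_of_adj hvx, adjMat_of_adj hvx', adjMat_of_not_adj hnyv,
        adjMat_of_not_adj hny'v]
      ring
    · have e1 : adjMat G i x = 1 := adjMat_of_adj (hXpair hiX hx hix)
      have e2 : adjMat G i x' = 1 := adjMat_of_adj (hXpair hiX hx' hix')
      rw [e1, e2]
      by_cases hiy2 : G.Adj i y
      · rw [adjMat_of_adj hiy2, adjMat_of_adj ((hII i hiX hix hix').mp hiy2)]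
        ring
      · rw [adjMat_of_not_adj hiy2,
          adjMat_of_not_adj (fun h => hiy2 ((hII i hiX hix hix').mpr h))]
        ring
    · have e1 : adjMat G i y = 1 := adjMat_of_adj (hYpair hiY hyY hiy)
      have e2 : adjMat G i y' = 1 := adjMat_of_adj (hYpair hiY hy'Y hiy')
      rw [e1, e2]
      by_cases hix2 : G.Adj i x
      · rw [adjMat_of_adj hix2, adjMat_of_adj ((hI i hiY hiy hiy').mp hix2)]
        ring
      · rw [adjMat_of_not_adj hix2,
          adjMat_of_not_adj (fun h => hix2 ((hI i hiY hiy hiy').mpr h))]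
        ring
  have hker : adjMat G *ᵥ w0 = 0 := by
    funext i
    have hexp : (adjMat G *ᵥ w0) i
        = adjMat G i x - adjMat G i x' + adjMat G i y - adjMat G i y' := by
      simp only [hw0, Matrix.mulVec_sub, Matrix.mulVec_add, Matrix.mulVec_single_one,
        Pi.sub_apply, Pi.add_apply, mul_one, Matrix.col_apply]
    rw [hexp, hval i]
    rfl
  have hw0y : w0 y = 1 := by
    simp only [hw0, Pi.sub_apply, Pi.add_apply]
    rw [Pi.single_eq_of_ne (Ne.symm hxny), Pi.single_eq_of_ne (Ne.symm hx'ny),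
      Pi.single_eq_same, Pi.single_eq_of_ne hyy']
    ring
  -- apply the deletion lemma
  obtain ⟨hpos0, hneg0⟩ := deletion G y w0 hker (by rw [hw0y]; norm_num)
    ({y}ᶜ : Set (Fin n)) (fun i => by simp)
    (Fintype.ofFinite _) (Classical.decEq _)
  have hpos : Nat.card {i // 0 < @eigs ↥({y}ᶜ : Set (Fin n)) (Fintype.ofFinite _)
        (Classical.decEq _) (G.induce ({y}ᶜ : Set (Fin n))) i}
      = Nat.card {i : Fin n // 0 < eigs G i} := hpos0
  have hneg : Nat.card {i // @eigs ↥({y}ᶜ : Set (Fin n)) (Fintype.ofFinite _)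
        (Classical.decEq _) (G.induce ({y}ᶜ : Set (Fin n))) i < 0}
      = Nat.card {i : Fin n // eigs G i < 0} := hneg0
  -- counting
  have hpartA : Nat.card {i : Fin n // 0 < eigs G i}
      + Nat.card {i : Fin n // eigs G i < 0}
      + Nat.card {i : Fin n // eigs G i = 0}
      = Fintype.card (Fin n) :=
    card_sign_partition (adjMat_isHermitian G)
  have hpartB : Nat.card {i // 0 < @eigs ↥({y}ᶜ : Set (Fin n)) (Fintype.ofFinite _)
        (Classical.decEq _) (G.induce ({y}ᶜ : Set (Fin n))) i}
      + Nat.card {i // @eigs ↥({y}ᶜ : Set (Fin n)) (Fintype.ofFinite _)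
        (Classical.decEq _) (G.induce ({y}ᶜ : Set (Fin n))) i < 0}
      + Nat.card {i // @eigs ↥({y}ᶜ : Set (Fin n)) (Fintype.ofFinite _)
        (Classical.decEq _) (G.induce ({y}ᶜ : Set (Fin n))) i = 0}
      = @Fintype.card ↥({y}ᶜ : Set (Fin n)) (Fintype.ofFinite _) :=
    @card_sign_partition ↥({y}ᶜ : Set (Fin n)) (Fintype.ofFinite _)
      (Classical.decEq _) _ (@adjMat_isHermitian _ (Fintype.ofFinite _)
        (Classical.decEq _) (G.induce ({y}ᶜ : Set (Fin n))))
  have hcardA : Fintype.card (Fin n) = n := Fintype.card_fin n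
  have hcardB : @Fintype.card ↥({y}ᶜ : Set (Fin n)) (Fintype.ofFinite _) = n - 1 := by
    rw [← @Nat.card_eq_fintype_card _ (Fintype.ofFinite _)]
    rw [Nat.card_congr (Equiv.subtypeEquivRight (fun i => by simp) :
      ↥({y}ᶜ : Set (Fin n)) ≃ {i : Fin n // i ≠ y})]
    rw [Nat.card_eq_fintype_card]
    rw [Fintype.card_subtype_compl, Fintype.card_subtype_eq, Fintype.card_fin]
  rw [hcardA] at hpartA
  rw [hcardB] at hpartB
  -- the congruent quadrangle
  have hset1 : G.neighborSet x \ {y, x'} = G.neighborSet x' \ {x, y'} := by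
    ext u
    simp only [Set.mem_diff, SimpleGraph.mem_neighborSet, Set.mem_insert_iff,
      Set.mem_singleton_iff]
    constructor
    · rintro ⟨hadj, hne⟩
      push_neg at hne
      have hunx : u ≠ x := hadj.ne'
      have huny' : u ≠ y' := fun h => hy'nx (h ▸ hadj)
      constructor
      · rcases htri u with huv | huX | huY
        · rw [huv]; exact hvx'.symm
        · exact hXpair hx' huX (fun h => hne.2 h.symm)
        · exact ((hI u huY hne.1 huny').mp hadj.symm).symm
      · push_neg
        exact ⟨hunx, huny'⟩
    · rintro ⟨hadj, hne⟩
      push_neg at hne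
      have hunx' : u ≠ x' := hadj.ne'
      have huny : u ≠ y := fun h => hynx' (h ▸ hadj)
      constructor
      · rcases htri u with huv | huX | huY
        · rw [huv]; exact hvx.symm
        · exact hXpair hx huX (fun h => hne.1 h.symm)
        · exact ((hI u huY huny hne.2).mpr hadj.symm).symm
      · push_neg
        exact ⟨huny, hunx'⟩
  have hset2 : G.neighborSet y' \ {x', y} = G.neighborSet y \ {y', x} := by
    ext u
    simp only [Set.mem_diff, SimpleGraph.mem_neighborSet, Set.mem_insert_iff,
      Set.mem_singleton_iff]
    constructor
    · rintro ⟨hadj, hne⟩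
      push_neg at hne
      have huny' : u ≠ y' := hadj.ne'
      have hunx : u ≠ x := fun h => hy'nx (by rw [h] at hadj; exact hadj.symm)
      constructor
      · rcases htri u with huv | huX | huY
        · rw [huv] at hadj; exact absurd hadj.symm hny'v
        · exact ((hII u huX hunx hne.1).mpr hadj.symm).symm
        · exact hYpair hyY huY (fun h => hne.2 h.symm)
      · push_neg
        exact ⟨huny', hunx⟩
    · rintro ⟨hadj, hne⟩
      push_neg at hne
      have huny : u ≠ y := hadj.ne'
      have hunx' : u ≠ x' := fun h => hynx' (by rw [h] at hadj; exact hadj.symm)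
      constructor
      · rcases htri u with huv | huX | huY
        · rw [huv] at hadj; exact absurd hadj.symm hnyv
        · exact ((hII u huX hne.2 hunx').mp hadj.symm).symm
        · exact hYpair hy'Y huY (fun h => hne.1 h.symm)
      · push_neg
        exact ⟨hunx', huny⟩
  have hquad : CongruentQuad G x x' y' y :=
    ⟨hxx', hxny', hxny, hx'ny', hx'ny, Ne.symm hyy', hadjxx', hy'Nx', hadjyy'.symm,
      hyNx.symm, hy'nx, hynx', hset1, hset2⟩
  refine ⟨hconn, y, ⟨x, x', y', y, hquad, Or.inr (Or.inr (Or.inr rfl))⟩, ?_, ?_⟩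
  · show Nat.card {i // 0 < @eigs ↥({y}ᶜ : Set (Fin n)) (Fintype.ofFinite _)
      (Classical.decEq _) (G.induce ({y}ᶜ : Set (Fin n))) i} = 2
    rw [hpos, hp2]
  · show Nat.card {i // @eigs ↥({y}ᶜ : Set (Fin n)) (Fintype.ofFinite _)
      (Classical.decEq _) (G.induce ({y}ᶜ : Set (Fin n))) i = 0} = s - 1
    rw [hpos, hp2, hneg] at hpartB
    rw [hp2, hz2] at hpartA
    omega

end TwoPosEig
end

section
/- Let G ∈ 𝒞𝒢^s(n) with 2 ≤ s ≤ n−3 be a non-reduced X-complete graph (with respect to a minimum-degree vertex v*, X = N(v*), Y = V(G) ∖ N[v*]), and let x, x' ∈ X be non-reduced vertices. Then N_Y(x) ∖ N_Y(x') = {y} and N_Y(x') ∖ N_Y(x) = {y'} are singletons, N_X(y) ∖ N_X(y') = {x} and N_X(y') ∖ N_X(y) = {x'}, and the induced quadrangle x x' y' y is a congruent quadrangle with congruent edges xx' and y'y. -/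
open Matrix BigOperators

namespace TwoPosEig

variable {V : Type*}

section Aux

lemma adjMat_of_adj_s10 [Fintype V] [DecidableEq V] {G : SimpleGraph V} {u w : V}
    (h : G.Adj u w) : adjMat G u w = 1 := by
  letI := Classical.decRel G.Adj
  simp [adjMat, h]

lemma adjMat_of_not_adj_s10 [Fintype V] [DecidableEq V] {G : SimpleGraph V} {u w : V}
    (h : ¬ G.Adj u w) : adjMat G u w = 0 := by
  letI := Classical.decRel G.Adj
  simp [adjMat, h]

lemma quadform_eq_sum [Fintype V] [DecidableEq V] {A : Matrix V V ℝ} (hA : A.IsHermitian)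
    (z : V → ℝ) :
    z ⬝ᵥ A *ᵥ z = ∑ i, hA.eigenvalues i *
      ((star (hA.eigenvectorUnitary : Matrix V V ℝ) *ᵥ z) i)^2 := by
  set U : Matrix V V ℝ := (hA.eigenvectorUnitary : Matrix V V ℝ) with hU
  have hspec : A = U * Matrix.diagonal hA.eigenvalues * star U := by
    have := hA.spectral_theorem
    simpa [RCLike.ofReal_real_eq_id] using this
  conv_lhs => rw [hspec]
  rw [← Matrix.mulVec_mulVec, ← Matrix.mulVec_mulVec, Matrix.dotProduct_mulVec]
  have hvm : z ᵥ* U = star U *ᵥ z := by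
    rw [Matrix.star_eq_conjTranspose, Matrix.conjTranspose_eq_transpose_of_trivial,
      Matrix.mulVec_transpose]
  rw [hvm]
  simp only [dotProduct, Matrix.mulVec_diagonal]
  exact Finset.sum_congr rfl fun i _ => by ring

lemma no_three_pos [Fintype V] [DecidableEq V] (G : SimpleGraph V)
    (hp : Nat.card {i : V // 0 < eigs G i} ≤ 2)
    (c1 c2 c3 : V → ℝ)
    (hq : ∀ a b c : ℝ, ¬(a = 0 ∧ b = 0 ∧ c = 0) →
      0 < (a • c1 + b • c2 + c • c3) ⬝ᵥ adjMat G *ᵥ (a • c1 + b • c2 + c • c3)) : False := by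
  classical
  set hA := adjMat_isHermitian G with hhA
  set U : Matrix V V ℝ := (hA.eigenvectorUnitary : Matrix V V ℝ) with hU
  set P := {i : V // 0 < eigs G i} with hP
  let T : Matrix V (Fin 3) ℝ := Matrix.of fun u j => ![c1, c2, c3] j u
  have hT : ∀ vv : Fin 3 → ℝ, T *ᵥ vv = vv 0 • c1 + vv 1 • c2 + vv 2 • c3 := by
    intro vv; funext u
    simp only [Matrix.mulVec, dotProduct, Fin.sum_univ_three, T, Matrix.of_apply,
      Pi.add_apply, Pi.smul_apply, smul_eq_mul]
    simp [Matrix.cons_val_zero, Matrix.cons_val_one]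
    ring
  let ψ : (Fin 3 → ℝ) →ₗ[ℝ] (P → ℝ) :=
    LinearMap.pi fun i : P =>
      (LinearMap.proj (i : V)) ∘ₗ (star U).mulVecLin ∘ₗ T.mulVecLin
  have hnotinj : ¬ Function.Injective ψ := by
    intro hinj
    have h3 := LinearMap.finrank_le_finrank_of_injective hinj
    rw [Module.finrank_pi, Module.finrank_pi, Fintype.card_fin] at h3
    rw [Nat.card_eq_fintype_card] at hp
    omega
  obtain ⟨a1, a2, heq, hne⟩ := Function.not_injective_iff.mp hnotinj
  set vv := a1 - a2 with hvv
  have hψ0 : ψ vv = 0 := by rw [hvv, map_sub, heq, sub_self]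
  have hvne : vv ≠ 0 := sub_ne_zero.mpr hne
  have hcoords : ¬(vv 0 = 0 ∧ vv 1 = 0 ∧ vv 2 = 0) := by
    rintro ⟨h0, h1, h2⟩
    apply hvne; funext i; fin_cases i <;> assumption
  have hQpos := hq (vv 0) (vv 1) (vv 2) hcoords
  rw [← hT vv] at hQpos
  have hzero : ∀ i : V, 0 < eigs G i → (star U *ᵥ (T *ᵥ vv)) i = 0 := by
    intro i hi
    have := congrFun hψ0 ⟨i, hi⟩
    simpa [ψ, LinearMap.pi_apply, LinearMap.comp_apply, Matrix.mulVecLin_apply] using this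
  have hQnp : (T *ᵥ vv) ⬝ᵥ adjMat G *ᵥ (T *ᵥ vv) ≤ 0 := by
    rw [quadform_eq_sum hA]
    apply Finset.sum_nonpos
    intro i _
    by_cases hi : 0 < eigs G i
    · rw [hzero i hi]; simp
    · push_neg at hi
      have heig : eigs G i = hA.eigenvalues i := rfl
      exact mul_nonpos_of_nonpos_of_nonneg (heig ▸ hi) (sq_nonneg _)
  linarith

lemma dot_sum6 [Fintype V] (v : V → ℝ) (w : Fin 6 → V → ℝ) :
    v ⬝ᵥ (∑ j, w j) = ∑ j, v ⬝ᵥ w j := by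
  simp only [dotProduct, Finset.sum_apply, Finset.mul_sum]
  exact Finset.sum_comm

lemma sum6_dot [Fintype V] (v : V → ℝ) (w : Fin 6 → V → ℝ) :
    (∑ j, w j) ⬝ᵥ v = ∑ j, w j ⬝ᵥ v := by
  simp only [dotProduct, Finset.sum_apply, Finset.sum_mul]
  exact Finset.sum_comm

lemma quad_eval_s10 [Fintype V] [DecidableEq V] (A : Matrix V V ℝ) (f : Fin 6 → V)
    (d : Fin 6 → ℝ) :
    (∑ i, d i • (Pi.single (f i) 1 : V → ℝ)) ⬝ᵥ A *ᵥ (∑ i, d i • (Pi.single (f i) 1 : V → ℝ))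
      = ∑ i, ∑ j, d i * d j * A (f i) (f j) := by
  have hAz : A *ᵥ (∑ i, d i • (Pi.single (f i) 1 : V → ℝ)) = ∑ j, d j • fun u => A u (f j) := by
    simp only [← Matrix.mulVecLin_apply, map_sum, _root_.map_smul]
    refine Finset.sum_congr rfl fun j _ => ?_
    congr 1
    simp [Matrix.mulVecLin_apply, Matrix.mulVec_single, Matrix.col_apply']
  rw [hAz, sum6_dot]
  refine Finset.sum_congr rfl fun i _ => ?_
  rw [smul_dotProduct, dot_sum6, Finset.smul_sum]
  refine Finset.sum_congr rfl fun j _ => ?_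
  rw [dotProduct_smul, single_dotProduct]
  simp only [smul_eq_mul]
  ring

lemma configA_contra [Fintype V] [DecidableEq V] (G : SimpleGraph V)
    (hp : Nat.card {i : V // 0 < eigs G i} ≤ 2)
    (v x x' y1 y2 y' : V)
    (e12 : G.Adj v x) (e13 : G.Adj v x') (e23 : G.Adj x x') (e24 : G.Adj x y1)
    (e25 : G.Adj x y2) (e36 : G.Adj x' y') (e45 : G.Adj y1 y2) (e46 : G.Adj y1 y')
    (e56 : G.Adj y2 y')
    (n14 : ¬G.Adj v y1) (n15 : ¬G.Adj v y2) (n16 : ¬G.Adj v y') (n26 : ¬G.Adj x y')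
    (n34 : ¬G.Adj x' y1) (n35 : ¬G.Adj x' y2) : False := by
  have hf0 : (![v,x,x',y1,y2,y'] : Fin 6 → V) 0 = v := rfl
  have hf1 : (![v,x,x',y1,y2,y'] : Fin 6 → V) 1 = x := rfl
  have hf2 : (![v,x,x',y1,y2,y'] : Fin 6 → V) 2 = x' := rfl
  have hf3 : (![v,x,x',y1,y2,y'] : Fin 6 → V) 3 = y1 := rfl
  have hf4 : (![v,x,x',y1,y2,y'] : Fin 6 → V) 4 = y2 := rfl
  have hf5 : (![v,x,x',y1,y2,y'] : Fin 6 → V) 5 = y' := rfl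
  apply no_three_pos G hp
    (∑ i, (![1,2,-1,0,-1,-2] : Fin 6 → ℝ) i • (Pi.single (![v,x,x',y1,y2,y'] i) 1 : V → ℝ))
    (∑ i, (![0,0,-2,0,1,-1] : Fin 6 → ℝ) i • (Pi.single (![v,x,x',y1,y2,y'] i) 1 : V → ℝ))
    (∑ i, (![0,1,2,1,2,0] : Fin 6 → ℝ) i • (Pi.single (![v,x,x',y1,y2,y'] i) 1 : V → ℝ))
  intro a b c hne
  have hz : a • (∑ i, (![1,2,-1,0,-1,-2] : Fin 6 → ℝ) i • (Pi.single (![v,x,x',y1,y2,y'] i) 1 : V → ℝ))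
      + b • (∑ i, (![0,0,-2,0,1,-1] : Fin 6 → ℝ) i • (Pi.single (![v,x,x',y1,y2,y'] i) 1 : V → ℝ))
      + c • (∑ i, (![0,1,2,1,2,0] : Fin 6 → ℝ) i • (Pi.single (![v,x,x',y1,y2,y'] i) 1 : V → ℝ))
      = ∑ i, (fun i => a * (![1,2,-1,0,-1,-2] : Fin 6 → ℝ) i + b * (![0,0,-2,0,1,-1] : Fin 6 → ℝ) i
          + c * (![0,1,2,1,2,0] : Fin 6 → ℝ) i) i • (Pi.single (![v,x,x',y1,y2,y'] i) 1 : V → ℝ) := by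
    simp only [Finset.smul_sum, smul_smul, ← Finset.sum_add_distrib, add_smul]
  rw [hz, quad_eval_s10]
  simp only [Fin.sum_univ_six, hf0, hf1, hf2, hf3, hf4, hf5]
  rw [adjMat_of_not_adj_s10 (G.irrefl), adjMat_of_not_adj_s10 (G.irrefl),
    adjMat_of_not_adj_s10 (G.irrefl), adjMat_of_not_adj_s10 (G.irrefl),
    adjMat_of_not_adj_s10 (G.irrefl), adjMat_of_not_adj_s10 (G.irrefl),
    adjMat_of_adj_s10 e12, adjMat_of_adj_s10 e12.symm, adjMat_of_adj_s10 e13, adjMat_of_adj_s10 e13.symm,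
    adjMat_of_adj_s10 e23, adjMat_of_adj_s10 e23.symm, adjMat_of_adj_s10 e24, adjMat_of_adj_s10 e24.symm,
    adjMat_of_adj_s10 e25, adjMat_of_adj_s10 e25.symm, adjMat_of_adj_s10 e36, adjMat_of_adj_s10 e36.symm,
    adjMat_of_adj_s10 e45, adjMat_of_adj_s10 e45.symm, adjMat_of_adj_s10 e46, adjMat_of_adj_s10 e46.symm,
    adjMat_of_adj_s10 e56, adjMat_of_adj_s10 e56.symm,
    adjMat_of_not_adj_s10 n14, adjMat_of_not_adj_s10 (fun h => n14 h.symm),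
    adjMat_of_not_adj_s10 n15, adjMat_of_not_adj_s10 (fun h => n15 h.symm),
    adjMat_of_not_adj_s10 n16, adjMat_of_not_adj_s10 (fun h => n16 h.symm),
    adjMat_of_not_adj_s10 n26, adjMat_of_not_adj_s10 (fun h => n26 h.symm),
    adjMat_of_not_adj_s10 n34, adjMat_of_not_adj_s10 (fun h => n34 h.symm),
    adjMat_of_not_adj_s10 n35, adjMat_of_not_adj_s10 (fun h => n35 h.symm)]
  have hp5 : (![1,2,-1,0,-1,-2] : Fin 6 → ℝ) 5 = -2 := rfl
  have hq5 : (![0,0,-2,0,1,-1] : Fin 6 → ℝ) 5 = -1 := rfl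
  have hr5 : (![0,1,2,1,2,0] : Fin 6 → ℝ) 5 = 0 := rfl
  simp only [hp5, hq5, hr5, Matrix.cons_val]
  norm_num
  by_contra hQ
  push_neg at hQ
  have hQ' : 2*a^2 + 2*b^2 + 14*c^2 - 10*b*c ≤ 0 := by nlinarith [hQ]
  have ha2 : a^2 ≤ 0 := by nlinarith [sq_nonneg (2*b - 5*c), sq_nonneg c]
  have ha : a = 0 := by
    have := le_antisymm ha2 (sq_nonneg a); exact pow_eq_zero_iff two_ne_zero |>.mp this
  have hc2 : c^2 ≤ 0 := by nlinarith [sq_nonneg (2*b - 5*c), sq_nonneg a]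
  have hc : c = 0 := by
    have := le_antisymm hc2 (sq_nonneg c); exact pow_eq_zero_iff two_ne_zero |>.mp this
  have hb2 : b^2 ≤ 0 := by nlinarith [sq_nonneg a, sq_nonneg c]
  have hb : b = 0 := by
    have := le_antisymm hb2 (sq_nonneg b); exact pow_eq_zero_iff two_ne_zero |>.mp this
  exact hne ⟨ha, hb, hc⟩

lemma configB_contra [Fintype V] [DecidableEq V] (G : SimpleGraph V)
    (hp : Nat.card {i : V // 0 < eigs G i} ≤ 2)
    (v x x' x'' y y' : V)
    (e12 : G.Adj v x) (e13 : G.Adj v x') (e14 : G.Adj v x'') (e23 : G.Adj x x')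
    (e24 : G.Adj x x'') (e34 : G.Adj x' x'') (e25 : G.Adj x y) (e45 : G.Adj x'' y)
    (e36 : G.Adj x' y') (e56 : G.Adj y y')
    (n15 : ¬G.Adj v y) (n16 : ¬G.Adj v y') (n26 : ¬G.Adj x y') (n35 : ¬G.Adj x' y)
    (n46 : ¬G.Adj x'' y') : False := by
  have hf0 : (![v,x,x',x'',y,y'] : Fin 6 → V) 0 = v := rfl
  have hf1 : (![v,x,x',x'',y,y'] : Fin 6 → V) 1 = x := rfl
  have hf2 : (![v,x,x',x'',y,y'] : Fin 6 → V) 2 = x' := rfl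
  have hf3 : (![v,x,x',x'',y,y'] : Fin 6 → V) 3 = x'' := rfl
  have hf4 : (![v,x,x',x'',y,y'] : Fin 6 → V) 4 = y := rfl
  have hf5 : (![v,x,x',x'',y,y'] : Fin 6 → V) 5 = y' := rfl
  apply no_three_pos G hp
    (∑ i, (![-1,0,-1,0,1,0] : Fin 6 → ℝ) i • (Pi.single (![v,x,x',x'',y,y'] i) 1 : V → ℝ))
    (∑ i, (![1,-1,1,0,1,2] : Fin 6 → ℝ) i • (Pi.single (![v,x,x',x'',y,y'] i) 1 : V → ℝ))
    (∑ i, (![2,1,-1,1,1,-2] : Fin 6 → ℝ) i • (Pi.single (![v,x,x',x'',y,y'] i) 1 : V → ℝ))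
  intro a b c hne
  have hz : a • (∑ i, (![-1,0,-1,0,1,0] : Fin 6 → ℝ) i • (Pi.single (![v,x,x',x'',y,y'] i) 1 : V → ℝ))
      + b • (∑ i, (![1,-1,1,0,1,2] : Fin 6 → ℝ) i • (Pi.single (![v,x,x',x'',y,y'] i) 1 : V → ℝ))
      + c • (∑ i, (![2,1,-1,1,1,-2] : Fin 6 → ℝ) i • (Pi.single (![v,x,x',x'',y,y'] i) 1 : V → ℝ))
      = ∑ i, (fun i => a * (![-1,0,-1,0,1,0] : Fin 6 → ℝ) i + b * (![1,-1,1,0,1,2] : Fin 6 → ℝ) i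
          + c * (![2,1,-1,1,1,-2] : Fin 6 → ℝ) i) i • (Pi.single (![v,x,x',x'',y,y'] i) 1 : V → ℝ) := by
    simp only [Finset.smul_sum, smul_smul, ← Finset.sum_add_distrib, add_smul]
  rw [hz, quad_eval_s10]
  simp only [Fin.sum_univ_six, hf0, hf1, hf2, hf3, hf4, hf5]
  rw [adjMat_of_not_adj_s10 (G.irrefl), adjMat_of_not_adj_s10 (G.irrefl),
    adjMat_of_not_adj_s10 (G.irrefl), adjMat_of_not_adj_s10 (G.irrefl),
    adjMat_of_not_adj_s10 (G.irrefl), adjMat_of_not_adj_s10 (G.irrefl),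
    adjMat_of_adj_s10 e12, adjMat_of_adj_s10 e12.symm, adjMat_of_adj_s10 e13, adjMat_of_adj_s10 e13.symm,
    adjMat_of_adj_s10 e14, adjMat_of_adj_s10 e14.symm, adjMat_of_adj_s10 e23, adjMat_of_adj_s10 e23.symm,
    adjMat_of_adj_s10 e24, adjMat_of_adj_s10 e24.symm, adjMat_of_adj_s10 e34, adjMat_of_adj_s10 e34.symm,
    adjMat_of_adj_s10 e25, adjMat_of_adj_s10 e25.symm, adjMat_of_adj_s10 e45, adjMat_of_adj_s10 e45.symm,
    adjMat_of_adj_s10 e36, adjMat_of_adj_s10 e36.symm, adjMat_of_adj_s10 e56, adjMat_of_adj_s10 e56.symm,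
    adjMat_of_not_adj_s10 n15, adjMat_of_not_adj_s10 (fun h => n15 h.symm),
    adjMat_of_not_adj_s10 n16, adjMat_of_not_adj_s10 (fun h => n16 h.symm),
    adjMat_of_not_adj_s10 n26, adjMat_of_not_adj_s10 (fun h => n26 h.symm),
    adjMat_of_not_adj_s10 n35, adjMat_of_not_adj_s10 (fun h => n35 h.symm),
    adjMat_of_not_adj_s10 n46, adjMat_of_not_adj_s10 (fun h => n46 h.symm)]
  have hp5 : (![-1,0,-1,0,1,0] : Fin 6 → ℝ) 5 = 0 := rfl
  have hq5 : (![1,-1,1,0,1,2] : Fin 6 → ℝ) 5 = 2 := rfl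
  have hr5 : (![2,1,-1,1,1,-2] : Fin 6 → ℝ) 5 = -2 := rfl
  simp only [hp5, hq5, hr5, Matrix.cons_val]
  norm_num
  by_contra hQ
  push_neg at hQ
  have hQ' : 2*a^2 + 4*b^2 + 6*c^2 - 2*a*b - 6*a*c ≤ 0 := by nlinarith [hQ]
  have hc2 : c^2 ≤ 0 := by nlinarith [sq_nonneg (2*a - b - 3*c), sq_nonneg (7*b - 3*c)]
  have hc : c = 0 := by
    have := le_antisymm hc2 (sq_nonneg c); exact pow_eq_zero_iff two_ne_zero |>.mp this
  have hb2 : b^2 ≤ 0 := by nlinarith [sq_nonneg (2*a - b - 3*c), sq_nonneg c, hc]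
  have hb : b = 0 := by
    have := le_antisymm hb2 (sq_nonneg b); exact pow_eq_zero_iff two_ne_zero |>.mp this
  have ha2 : a^2 ≤ 0 := by
    have h1 : a*b = 0 := by rw [hb]; ring
    have h2 : a*c = 0 := by rw [hc]; ring
    have h3 : b^2 = 0 := by rw [hb]; ring
    have h4 : c^2 = 0 := by rw [hc]; ring
    linarith [hQ']
  have ha : a = 0 := by
    have := le_antisymm ha2 (sq_nonneg a); exact pow_eq_zero_iff two_ne_zero |>.mp this
  exact hne ⟨ha, hb, hc⟩

end Aux

theorem nonreduced_Xcomplete_quad {n s : ℕ} (hs : 2 ≤ s) (hsn : s ≤ n - 3)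
    (G : SimpleGraph (Fin n)) (hconn : G.Connected) (hG : memClass s G)
    (v : Fin n) (hv : IsMinDegVertex G v)
    (X Y : Set (Fin n)) (hX : X = G.neighborSet v) (hY : Y = Yset G v)
    (hXc : IsXComplete G v)
    (x x' : Fin n) (hx : x ∈ X) (hx' : x' ∈ X)
    (h1 : ((G.neighborSet x ∩ Y) \ (G.neighborSet x' ∩ Y)).Nonempty)
    (h2 : ((G.neighborSet x' ∩ Y) \ (G.neighborSet x ∩ Y)).Nonempty) :
    ∃ y y' : Fin n,
      (G.neighborSet x ∩ Y) \ (G.neighborSet x' ∩ Y) = {y} ∧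
      (G.neighborSet x' ∩ Y) \ (G.neighborSet x ∩ Y) = {y'} ∧
      (G.neighborSet y ∩ X) \ (G.neighborSet y' ∩ X) = {x} ∧
      (G.neighborSet y' ∩ X) \ (G.neighborSet y ∩ X) = {x'} ∧
      CongruentQuad G x x' y' y := by
  classical
  -- basic membership facts
  have hvX : ∀ {z : Fin n}, z ∈ X → G.Adj v z := by
    intro z hz; rw [hX] at hz; exact hz
  have hYmem : ∀ {z : Fin n}, z ∈ Y → ¬G.Adj v z ∧ z ≠ v := by
    intro z hz
    rw [hY] at hz
    simp only [Yset, Set.mem_compl_iff, Set.mem_union, SimpleGraph.mem_neighborSet,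
      Set.mem_singleton_iff, not_or] at hz
    exact hz
  have htri : ∀ z : Fin n, z = v ∨ z ∈ X ∨ z ∈ Y := by
    intro z
    by_cases h1 : z = v
    · exact Or.inl h1
    by_cases h2 : G.Adj v z
    · exact Or.inr (Or.inl (by rw [hX]; exact h2))
    · refine Or.inr (Or.inr ?_)
      rw [hY]
      simp only [Yset, Set.mem_compl_iff, Set.mem_union, SimpleGraph.mem_neighborSet,
        Set.mem_singleton_iff, not_or]
      exact ⟨h2, h1⟩
  have cliqueX : ∀ {z w : Fin n}, z ∈ X → w ∈ X → z ≠ w → G.Adj z w := by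
    intro z w hz hw hne
    exact hXc.2.2 (hX ▸ hz) (hX ▸ hw) hne
  have cliqueY : ∀ {z w : Fin n}, z ∈ Y → w ∈ Y → z ≠ w → G.Adj z w := by
    intro z w hz hw hne
    exact hXc.2.1 (hY ▸ hz) (hY ▸ hw) hne
  have hXYne : ∀ {z w : Fin n}, z ∈ X → w ∈ Y → z ≠ w := by
    intro z w hz hw h
    exact (hYmem hw).1 (h ▸ hvX hz)
  -- the two witnesses
  obtain ⟨y, hy⟩ := h1
  obtain ⟨y', hy'⟩ := h2
  have hxy : G.Adj x y := hy.1.1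
  have hyY : y ∈ Y := hy.1.2
  have hx'ny : ¬ G.Adj x' y := fun h => hy.2 ⟨h, hyY⟩
  have hx'y' : G.Adj x' y' := hy'.1.1
  have hy'Y : y' ∈ Y := hy'.1.2
  have hxny' : ¬ G.Adj x y' := fun h => hy'.2 ⟨h, hy'Y⟩
  have hvx : G.Adj v x := hvX hx
  have hvx' : G.Adj v x' := hvX hx'
  have hxx'ne : x ≠ x' := fun h => hx'ny (h ▸ hxy)
  have hxx' : G.Adj x x' := cliqueX hx hx' hxx'ne
  have hyy'ne : y ≠ y' := fun h => hxny' (h ▸ hxy)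
  have hyy' : G.Adj y y' := cliqueY hyY hy'Y hyy'ne
  -- extract the positive-eigenvalue count
  have hp2 := hG.1
  unfold posCount at hp2
  have hp : Nat.card {i : Fin n // 0 < @eigs (Fin n) (Fintype.ofFinite (Fin n))
      (Classical.decEq (Fin n)) G i} ≤ 2 := le_of_eq hp2
  -- Claim 1
  have claim1 : (G.neighborSet x ∩ Y) \ (G.neighborSet x' ∩ Y) = {y} := by
    refine Set.eq_singleton_iff_unique_mem.mpr ⟨⟨⟨hxy, hyY⟩, fun h => hx'ny h.1⟩, ?_⟩
    intro z hz
    by_contra hzy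
    have hxz : G.Adj x z := hz.1.1
    have hzY : z ∈ Y := hz.1.2
    have hx'nz : ¬ G.Adj x' z := fun h => hz.2 ⟨h, hzY⟩
    have hzy'ne : z ≠ y' := fun h => hxny' (h ▸ hxz)
    exact @configA_contra (Fin n) (Fintype.ofFinite (Fin n)) (Classical.decEq (Fin n)) G hp
      v x x' y z y' hvx hvx' hxx' hxy hxz hx'y'
      (cliqueY hyY hzY (fun h => hzy h.symm)) hyy' (cliqueY hzY hy'Y hzy'ne)
      (hYmem hyY).1 (hYmem hzY).1 (hYmem hy'Y).1 hxny' hx'ny hx'nz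
  -- Claim 2
  have claim2 : (G.neighborSet x' ∩ Y) \ (G.neighborSet x ∩ Y) = {y'} := by
    refine Set.eq_singleton_iff_unique_mem.mpr ⟨⟨⟨hx'y', hy'Y⟩, fun h => hxny' h.1⟩, ?_⟩
    intro z hz
    by_contra hzy'
    have hx'z : G.Adj x' z := hz.1.1
    have hzY : z ∈ Y := hz.1.2
    have hxnz : ¬ G.Adj x z := fun h => hz.2 ⟨h, hzY⟩
    have hzyne : z ≠ y := fun h => hx'ny (h ▸ hx'z)
    exact @configA_contra (Fin n) (Fintype.ofFinite (Fin n)) (Classical.decEq (Fin n)) G hp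
      v x' x y' z y hvx' hvx hxx'.symm hx'y' hx'z hxy
      (cliqueY hy'Y hzY (fun h => hzy' h.symm)) hyy'.symm (cliqueY hzY hyY hzyne)
      (hYmem hy'Y).1 (hYmem hzY).1 (hYmem hyY).1 hx'ny hxny' hxnz
  -- Claim 3
  have claim3 : (G.neighborSet y ∩ X) \ (G.neighborSet y' ∩ X) = {x} := by
    refine Set.eq_singleton_iff_unique_mem.mpr ⟨⟨⟨hxy.symm, hx⟩, fun h => hxny' h.1.symm⟩, ?_⟩
    intro z hz
    by_contra hzx
    have hyz : G.Adj y z := hz.1.1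
    have hzX : z ∈ X := hz.1.2
    have hy'nz : ¬ G.Adj y' z := fun h => hz.2 ⟨h, hzX⟩
    have hzx'ne : z ≠ x' := fun h => hx'ny (h ▸ hyz.symm)
    exact @configB_contra (Fin n) (Fintype.ofFinite (Fin n)) (Classical.decEq (Fin n)) G hp
      v x x' z y y' hvx hvx' (hvX hzX) hxx' (cliqueX hx hzX (fun h => hzx h.symm))
      (cliqueX hx' hzX (fun h => hzx'ne h.symm)) hxy hyz.symm hx'y' hyy'
      (hYmem hyY).1 (hYmem hy'Y).1 hxny' hx'ny (fun h => hy'nz h.symm)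
  -- Claim 4
  have claim4 : (G.neighborSet y' ∩ X) \ (G.neighborSet y ∩ X) = {x'} := by
    refine Set.eq_singleton_iff_unique_mem.mpr ⟨⟨⟨hx'y'.symm, hx'⟩, fun h => hx'ny h.1.symm⟩, ?_⟩
    intro z hz
    by_contra hzx'
    have hy'z : G.Adj y' z := hz.1.1
    have hzX : z ∈ X := hz.1.2
    have hynz : ¬ G.Adj y z := fun h => hz.2 ⟨h, hzX⟩
    have hzxne : z ≠ x := fun h => hxny' (h ▸ hy'z.symm)
    exact @configB_contra (Fin n) (Fintype.ofFinite (Fin n)) (Classical.decEq (Fin n)) G hp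
      v x' x z y' y hvx' hvx (hvX hzX) hxx'.symm (cliqueX hx' hzX (fun h => hzx' h.symm))
      (cliqueX hx hzX (fun h => hzxne h.symm)) hx'y' hy'z.symm hxy hyy'.symm
      (hYmem hy'Y).1 (hYmem hyY).1 hx'ny hxny' (fun h => hynz h.symm)
  refine ⟨y, y', claim1, claim2, claim3, claim4, ?_⟩
  -- CongruentQuad G x x' y' y
  refine ⟨hxx'ne, hXYne hx hy'Y, hXYne hx hyY, hXYne hx' hy'Y, hXYne hx' hyY,
    (fun h => hyy'ne h.symm), hxx', hx'y', hyy'.symm, hxy.symm, hxny', hx'ny, ?_, ?_⟩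
  · -- N(x) \ {y, x'} = N(x') \ {x, y'}
    ext z
    simp only [Set.mem_diff, SimpleGraph.mem_neighborSet, Set.mem_insert_iff,
      Set.mem_singleton_iff, not_or]
    constructor
    · rintro ⟨hadj, hzy, hzx'⟩
      refine ⟨?_, fun h => G.irrefl (h ▸ hadj), fun h => hxny' (h ▸ hadj)⟩
      rcases htri z with rfl | hzX | hzY
      · exact hvx'.symm
      · exact cliqueX hx' hzX (fun h => hzx' h.symm)
      · have hzmem : z ∈ G.neighborSet x' ∩ Y := by
          by_contra hcon
          have hmem : z ∈ (G.neighborSet x ∩ Y) \ (G.neighborSet x' ∩ Y) := ⟨⟨hadj, hzY⟩, hcon⟩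
          rw [claim1] at hmem
          exact hzy hmem
        exact hzmem.1
    · rintro ⟨hadj, hzx, hzy'⟩
      refine ⟨?_, fun h => hx'ny (h ▸ hadj), fun h => G.irrefl (h ▸ hadj)⟩
      rcases htri z with rfl | hzX | hzY
      · exact hvx.symm
      · exact cliqueX hx hzX (fun h => hzx h.symm)
      · have hzmem : z ∈ G.neighborSet x ∩ Y := by
          by_contra hcon
          have hmem : z ∈ (G.neighborSet x' ∩ Y) \ (G.neighborSet x ∩ Y) := ⟨⟨hadj, hzY⟩, hcon⟩
          rw [claim2] at hmem
          exact hzy' hmem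
        exact hzmem.1
  · -- N(y') \ {x', y} = N(y) \ {y', x}
    ext z
    simp only [Set.mem_diff, SimpleGraph.mem_neighborSet, Set.mem_insert_iff,
      Set.mem_singleton_iff, not_or]
    constructor
    · rintro ⟨hadj, hzx', hzy⟩
      refine ⟨?_, fun h => G.irrefl (h ▸ hadj), fun h => hxny' ((h ▸ hadj).symm)⟩
      rcases htri z with rfl | hzX | hzY
      · exact absurd hadj.symm (hYmem hy'Y).1
      · have hzmem : z ∈ G.neighborSet y ∩ X := by
          by_contra hcon
          have hmem : z ∈ (G.neighborSet y' ∩ X) \ (G.neighborSet y ∩ X) := ⟨⟨hadj, hzX⟩, hcon⟩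
          rw [claim4] at hmem
          exact hzx' hmem
        exact hzmem.1
      · exact cliqueY hyY hzY (fun h => hzy h.symm)
    · rintro ⟨hadj, hzy', hzx⟩
      refine ⟨?_, fun h => hx'ny ((h ▸ hadj).symm), fun h => G.irrefl (h ▸ hadj)⟩
      rcases htri z with rfl | hzX | hzY
      · exact absurd hadj.symm (hYmem hyY).1
      · have hzmem : z ∈ G.neighborSet y' ∩ X := by
          by_contra hcon
          have hmem : z ∈ (G.neighborSet y ∩ X) \ (G.neighborSet y' ∩ X) := ⟨⟨hadj, hzX⟩, hcon⟩
          rw [claim3] at hmem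
          exact hzx hmem
        exact hzmem.1
      · exact cliqueY hy'Y hzY (fun h => hzy' h.symm)


end TwoPosEig
end

section
/- Every graph G ∈ 𝓓* satisfies λ_5(G) < 0, i.e., η(G) = 2. Consequently, for 3 ≤ s ≤ n−3 there is no graph in 𝓓* with nullity s, and hence no reduced X-complete graph lies in 𝒞𝒢^s(n) for any 3 ≤ s ≤ n−3. -/
open Matrix BigOperators

namespace TwoPosEig

variable {V : Type*}

set_option linter.unusedSectionVars false
set_option linter.unusedVariables false

section KeyLemma

variable [Fintype V] [DecidableEq V] (G : SimpleGraph V) [inst : DecidableRel G.Adj]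

lemma adjMat_eq : adjMat G = G.adjMatrix ℝ := by
  haveI : Subsingleton (DecidableRel G.Adj) :=
    ⟨fun a b => funext fun x => funext fun y => Subsingleton.elim _ _⟩
  unfold adjMat
  rw [Subsingleton.elim (Classical.decRel G.Adj) inst]

lemma ker_row {x : V → ℝ} (hx : (adjMat G).mulVec x = 0) (u : V) :
    ∑ w ∈ G.neighborFinset u, x w = 0 := by
  have h := congrFun hx u
  rw [adjMat_eq] at h
  simpa using h

theorem key_zero (A B : Finset V)
    (hdisj : ∀ v, ¬(v ∈ A ∧ v ∈ B))
    (hcover : ∀ v, v ∈ A ∨ v ∈ B)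
    (hcA : ∀ u ∈ A, ∀ u' ∈ A, u ≠ u' → G.Adj u u')
    (hcB : ∀ w ∈ B, ∀ w' ∈ B, w ≠ w' → G.Adj w w')
    (hnest : ∀ u ∈ A, ∀ u' ∈ A,
      B.filter (fun w => G.Adj u w) ⊆ B.filter (fun w => G.Adj u' w) ∨
      B.filter (fun w => G.Adj u' w) ⊆ B.filter (fun w => G.Adj u w))
    {x : V → ℝ} (hx : (adjMat G).mulVec x = 0)
    (hA : ∑ v ∈ A, x v = 0) (hB : ∑ v ∈ B, x v = 0) :
    x = 0 := by
  classical
  set NB : V → Finset V := fun u => B.filter (fun w => G.Adj u w) with hNBdef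
  set NA : V → Finset V := fun w => A.filter (fun u => G.Adj w u) with hNAdef
  -- the two transformed kernel equations
  have eqA : ∀ u ∈ A, x u = ∑ w ∈ NB u, x w := by
    intro u hu
    have h0 := ker_row G hx u
    have hsplit : G.neighborFinset u = (A.erase u) ∪ NB u := by
      ext w
      simp only [SimpleGraph.mem_neighborFinset, Finset.mem_union, Finset.mem_erase,
        hNBdef, Finset.mem_filter]
      constructor
      · intro hadj
        rcases hcover w with hw | hw
        · exact Or.inl ⟨fun h => G.irrefl (h ▸ hadj), hw⟩
        · exact Or.inr ⟨hw, hadj⟩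
      · rintro (⟨hne, hw⟩ | ⟨hw, hadj⟩)
        · exact hcA u hu w hw (Ne.symm hne)
        · exact hadj
    have hd : Disjoint (A.erase u) (NB u) := by
      refine Finset.disjoint_left.mpr ?_
      intro a ha hb
      exact hdisj a ⟨Finset.mem_of_mem_erase ha, (Finset.mem_filter.mp hb).1⟩
    rw [hsplit, Finset.sum_union hd] at h0
    have h1 : x u + ∑ v ∈ A.erase u, x v = 0 := by
      rw [Finset.add_sum_erase A x hu]; exact hA
    linarith
  have eqB : ∀ w ∈ B, x w = -(∑ a ∈ A \ NA w, x a) := by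
    intro w hw
    have h0 := ker_row G hx w
    have hsplit : G.neighborFinset w = (B.erase w) ∪ NA w := by
      ext u
      simp only [SimpleGraph.mem_neighborFinset, Finset.mem_union, Finset.mem_erase,
        hNAdef, Finset.mem_filter]
      constructor
      · intro hadj
        rcases hcover u with hu | hu
        · exact Or.inr ⟨hu, hadj⟩
        · exact Or.inl ⟨fun h => G.irrefl (h ▸ hadj), hu⟩
      · rintro (⟨hne, hu⟩ | ⟨hu, hadj⟩)
        · exact hcB w hw u hu (Ne.symm hne)
        · exact hadj
    have hd : Disjoint (B.erase w) (NA w) := by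
      refine Finset.disjoint_left.mpr ?_
      intro a ha hb
      exact hdisj a ⟨(Finset.mem_filter.mp hb).1, Finset.mem_of_mem_erase ha⟩
    rw [hsplit, Finset.sum_union hd] at h0
    have h1 : x w + ∑ v ∈ B.erase w, x v = 0 := by
      rw [Finset.add_sum_erase B x hw]; exact hB
    have h2 : ∑ a ∈ A \ NA w, x a + ∑ a ∈ NA w, x a = 0 := by
      rw [Finset.sum_sdiff (Finset.filter_subset _ _)]; exact hA
    linarith
  -- the main induction
  have main : ∀ N : ℕ, ∀ v : V,
      (v ∈ A → (A.filter (fun a => NB a ⊆ NB v)).card + (NB v).card ≤ N → x v = 0) ∧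
      (v ∈ B → (B.filter (fun b => NA v ⊆ NA b)).card + (A \ NA v).card ≤ N → x v = 0) := by
    intro N
    induction N using Nat.strong_induction_on with
    | _ N ih =>
    intro v
    constructor
    · intro hv hm
      rw [eqA v hv]
      apply Finset.sum_eq_zero
      intro w hw
      have hwB : w ∈ B := (Finset.mem_filter.mp hw).1
      have hadj : G.Adj v w := (Finset.mem_filter.mp hw).2
      have hvNAw : v ∈ NA w := Finset.mem_filter.mpr ⟨hv, hadj.symm⟩
      have h1 : B.filter (fun b => NA w ⊆ NA b) ⊆ NB v := by
        intro b hb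
        obtain ⟨hbB, hsub⟩ := Finset.mem_filter.mp hb
        have : v ∈ NA b := hsub hvNAw
        exact Finset.mem_filter.mpr ⟨hbB, ((Finset.mem_filter.mp this).2).symm⟩
      have h2 : A \ NA w ⊂ A.filter (fun a => NB a ⊆ NB v) := by
        rw [Finset.ssubset_iff_of_subset]
        · exact ⟨v, Finset.mem_filter.mpr ⟨hv, le_refl _⟩, by
            intro hcon
            exact (Finset.mem_sdiff.mp hcon).2 hvNAw⟩
        · intro a ha
          obtain ⟨haA, hanot⟩ := Finset.mem_sdiff.mp ha
          refine Finset.mem_filter.mpr ⟨haA, ?_⟩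
          rcases hnest a haA v hv with h | h
          · exact h
          · exfalso
            exact hanot (Finset.mem_filter.mpr ⟨haA, ((Finset.mem_filter.mp (h hw)).2).symm⟩)
      have hlt : (B.filter (fun b => NA w ⊆ NA b)).card + (A \ NA w).card < N := by
        have c1 := Finset.card_le_card h1
        have c2 := Finset.card_lt_card h2
        omega
      exact ((ih _ hlt) w).2 hwB le_rfl
    · intro hv hm
      rw [eqB v hv, neg_eq_zero]
      apply Finset.sum_eq_zero
      intro a ha
      obtain ⟨haA, hanot⟩ := Finset.mem_sdiff.mp ha
      have hnadj : ¬ G.Adj v a := fun h => hanot (Finset.mem_filter.mpr ⟨haA, h⟩)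
      have h1 : A.filter (fun a' => NB a' ⊆ NB a) ⊆ A \ NA v := by
        intro a' ha'
        obtain ⟨ha'A, hsub⟩ := Finset.mem_filter.mp ha'
        refine Finset.mem_sdiff.mpr ⟨ha'A, ?_⟩
        intro hcon
        have hva' : G.Adj a' v := ((Finset.mem_filter.mp hcon).2).symm
        have : v ∈ NB a' := Finset.mem_filter.mpr ⟨hv, hva'⟩
        have : v ∈ NB a := hsub this
        exact hnadj ((Finset.mem_filter.mp this).2).symm
      have h2 : NB a ⊂ B.filter (fun b => NA v ⊆ NA b) := by
        rw [Finset.ssubset_iff_of_subset]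
        · refine ⟨v, Finset.mem_filter.mpr ⟨hv, le_refl _⟩, ?_⟩
          intro hcon
          exact hnadj (((Finset.mem_filter.mp hcon).2).symm)
        · intro b hb
          obtain ⟨hbB, habj⟩ := Finset.mem_filter.mp hb
          refine Finset.mem_filter.mpr ⟨hbB, ?_⟩
          intro a'' ha''
          obtain ⟨ha''A, hva''⟩ := Finset.mem_filter.mp ha''
          rcases hnest a'' ha''A a haA with h | h
          · exfalso
            have : v ∈ NB a'' := Finset.mem_filter.mpr ⟨hv, hva''.symm⟩
            have : v ∈ NB a := h this
            exact hnadj ((Finset.mem_filter.mp this).2).symm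
          · have : b ∈ NB a'' := h hb
            exact Finset.mem_filter.mpr ⟨ha''A, ((Finset.mem_filter.mp this).2).symm⟩
      have hlt : (A.filter (fun a' => NB a' ⊆ NB a)).card + (NB a).card < N := by
        have c1 := Finset.card_le_card h1
        have c2 := Finset.card_lt_card h2
        omega
      exact ((ih _ hlt) a).1 haA le_rfl
  funext v
  show x v = 0
  rcases hcover v with hv | hv
  · exact ((main _ v).1 hv le_rfl)
  · exact ((main _ v).2 hv le_rfl)

theorem key_finrank [Fintype V] [DecidableEq V] (G : SimpleGraph V) [DecidableRel G.Adj]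
    (A B : Finset V)
    (hdisj : ∀ v, ¬(v ∈ A ∧ v ∈ B))
    (hcover : ∀ v, v ∈ A ∨ v ∈ B)
    (hcA : ∀ u ∈ A, ∀ u' ∈ A, u ≠ u' → G.Adj u u')
    (hcB : ∀ w ∈ B, ∀ w' ∈ B, w ≠ w' → G.Adj w w')
    (hnest : ∀ u ∈ A, ∀ u' ∈ A,
      B.filter (fun w => G.Adj u w) ⊆ B.filter (fun w => G.Adj u' w) ∨
      B.filter (fun w => G.Adj u' w) ⊆ B.filter (fun w => G.Adj u w)) :
    Module.finrank ℝ (LinearMap.ker (adjMat G).mulVecLin) ≤ 2 := by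
  classical
  let ψ : (V → ℝ) →ₗ[ℝ] ℝ × ℝ :=
    { toFun := fun x => (∑ v ∈ A, x v, ∑ v ∈ B, x v)
      map_add' := by
        intro x y
        simp [Finset.sum_add_distrib, Prod.ext_iff]
      map_smul' := by
        intro c x
        simp [Finset.mul_sum, Prod.ext_iff] }
  let φ := ψ.comp (LinearMap.ker (adjMat G).mulVecLin).subtype
  have hinj : Function.Injective φ := by
    rw [← LinearMap.ker_eq_bot, LinearMap.ker_eq_bot']
    rintro ⟨x, hxmem⟩ h0
    have hx : (adjMat G).mulVec x = 0 := LinearMap.mem_ker.mp hxmem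
    have hpair : (∑ v ∈ A, x v, ∑ v ∈ B, x v) = ((0 : ℝ), (0 : ℝ)) := by
      have : φ ⟨x, hxmem⟩ = 0 := h0
      simpa [φ, ψ, Prod.ext_iff] using this
    have hA : ∑ v ∈ A, x v = 0 := (Prod.ext_iff.mp hpair).1
    have hB : ∑ v ∈ B, x v = 0 := (Prod.ext_iff.mp hpair).2
    exact Subtype.ext (key_zero G A B hdisj hcover hcA hcB hnest hx hA hB)
  have h2 := LinearMap.finrank_le_finrank_of_injective hinj
  simpa [Module.finrank_prod] using h2

end KeyLemma

section Spec
variable [Fintype V] [DecidableEq V] (G : SimpleGraph V)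
variable [Fintype V] [DecidableEq V] (G : SimpleGraph V)

lemma subsingleton_deq : Subsingleton (DecidableEq V) :=
  ⟨fun a b => funext fun x => funext fun y => Subsingleton.elim _ _⟩

lemma card_zero_eigs :
    Nat.card {i : V // eigs G i = 0} =
      Module.finrank ℝ (LinearMap.ker (adjMat G).mulVecLin) := by
  classical
  have hH := adjMat_isHermitian G
  have h1 : (adjMat G).rank = Fintype.card {i : V // eigs G i ≠ 0} :=
    hH.rank_eq_card_non_zero_eigs
  have h2 : (adjMat G).rank + Module.finrank ℝ (LinearMap.ker (adjMat G).mulVecLin)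
      = Fintype.card V := by
    have h := LinearMap.finrank_range_add_finrank_ker ((adjMat G).mulVecLin)
    rwa [Module.finrank_fintype_fun_eq_card] at h
  have h3 : Fintype.card {i : V // eigs G i = 0} + Fintype.card {i : V // eigs G i ≠ 0}
      = Fintype.card V := by
    classical
    rw [Fintype.card_subtype, Fintype.card_subtype]
    have := Finset.card_filter_add_card_filter_not
      (s := (Finset.univ : Finset V)) (p := fun i => eigs G i = 0)
    simpa using this
  rw [Nat.card_eq_fintype_card]
  omega

lemma nullCount_eq_finrank :
    nullCount G = Module.finrank ℝ (LinearMap.ker (adjMat G).mulVecLin) := by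
  haveI := subsingleton_deq (V := V)
  unfold nullCount
  rw [Subsingleton.elim (Fintype.ofFinite V) ‹Fintype V›,
    Subsingleton.elim (Classical.decEq V) ‹DecidableEq V›]
  exact card_zero_eigs G

lemma lam_eq (k : ℕ) :
    lam G k = (((Finset.univ.val.map (eigs G)).sort (· ≤ ·)).reverse).getD (k - 1) 0 := by
  haveI := subsingleton_deq (V := V)
  unfold lam
  rw [Subsingleton.elim (Fintype.ofFinite V) ‹Fintype V›,
    Subsingleton.elim (Classical.decEq V) ‹DecidableEq V›]

lemma count_zero_eigList :
    (((Finset.univ.val.map (eigs G)).sort (· ≤ ·)).reverse).count 0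
      = nullCount G := by
  classical
  rw [List.count_reverse]
  have h1 : ((((Finset.univ : Finset V).val.map (eigs G)).sort (· ≤ ·)) : List ℝ).count 0
      = Multiset.count 0 ((Finset.univ : Finset V).val.map (eigs G)) := by
    rw [← Multiset.coe_count, Multiset.sort_eq]
  rw [h1, Multiset.count_map, nullCount_eq_finrank, ← card_zero_eigs]
  rw [Nat.card_eq_fintype_card, Fintype.card_subtype]
  congr 1
  ext i
  simp [eq_comm]

lemma length_eigList :
    (((Finset.univ.val.map (eigs G)).sort (· ≤ ·)).reverse).length = Fintype.card V := by
  simp [Multiset.length_sort]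

lemma sorted_eigList :
    (((Finset.univ.val.map (eigs G)).sort (· ≤ ·)).reverse).Pairwise (· ≥ ·) := by
  rw [List.pairwise_reverse]
  exact (Multiset.pairwise_sort _ (· ≤ ·)).imp (fun h => h)

end Spec

section Lists

lemma count_split {α} [DecidableEq α] (l : List α) (a : α) (m : ℕ) :
    l.count a = (l.take m).count a + (l.drop m).count a := by
  conv_lhs => rw [← List.take_append_drop m l]
  rw [List.count_append]

lemma count_ge_two {α} [DecidableEq α] {l : List α} {a : α} {i j : ℕ} (hij : i < j)
    (hj : j < l.length) (h1 : l[i]'(lt_trans hij hj) = a) (h2 : l[j] = a) :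
    2 ≤ l.count a := by
  have hcnt := count_split l a (i+1)
  have m1 : a ∈ l.take (i+1) := by
    have hi : i < (l.take (i+1)).length := by
      rw [List.length_take]; omega
    have : (l.take (i+1))[i] = a := by rw [List.getElem_take]; exact h1
    exact this ▸ List.getElem_mem hi
  have m2 : a ∈ l.drop (i+1) := by
    have hjd : j - (i+1) < (l.drop (i+1)).length := by
      rw [List.length_drop]; omega
    have : (l.drop (i+1))[j - (i+1)] = a := by
      rw [List.getElem_drop]
      have hw : i + 1 + (j - (i+1)) = j := by omega
      simp_rw [hw]; exact h2
    exact this ▸ List.getElem_mem hjd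
  have c1 := List.count_pos_iff.mpr m1
  have c2 := List.count_pos_iff.mpr m2
  omega

lemma count_ge_three {α} [DecidableEq α] {l : List α} {a : α} {i j k : ℕ} (hij : i < j)
    (hjk : j < k) (hk : k < l.length) (h1 : l[i]'(by omega) = a) (h2 : l[j]'(by omega) = a)
    (h3 : l[k] = a) : 3 ≤ l.count a := by
  have hcnt := count_split l a (i+1)
  have m1 : a ∈ l.take (i+1) := by
    have hi : i < (l.take (i+1)).length := by
      rw [List.length_take]; omega
    have : (l.take (i+1))[i] = a := by rw [List.getElem_take]; exact h1
    exact this ▸ List.getElem_mem hi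
  have hlen : (l.drop (i+1)).length = l.length - (i+1) := List.length_drop
  have g2 : (l.drop (i+1))[j - (i+1)]'(by omega) = a := by
    rw [List.getElem_drop]
    have hw : i + 1 + (j - (i+1)) = j := by omega
    simp_rw [hw]; exact h2
  have g3 : (l.drop (i+1))[k - (i+1)]'(by omega) = a := by
    rw [List.getElem_drop]
    have hw : i + 1 + (k - (i+1)) = k := by omega
    simp_rw [hw]; exact h3
  have c2 := count_ge_two (l := l.drop (i+1)) (a := a) (i := j - (i+1)) (j := k - (i+1))
    (by omega) (by omega) g2 g3
  have c1 := List.count_pos_iff.mpr m1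
  omega

lemma goalA {l : List ℝ} (hlen : 4 ≤ l.length) (h3 : l.getD 2 0 = 0) (h4 : l.getD 3 0 = 0) :
    2 ≤ l.count 0 := by
  rw [List.getD_eq_getElem (l := l) (n := 2) (d := 0) (by omega)] at h3
  rw [List.getD_eq_getElem (l := l) (n := 3) (d := 0) (by omega)] at h4
  exact count_ge_two (by norm_num) (by omega) h3 h4

lemma goalB {l : List ℝ} (hsort : l.Pairwise (· ≥ ·)) (hlen : 5 ≤ l.length)
    (hcount : l.count 0 = 2) (h3 : l.getD 2 0 = 0) (h4 : l.getD 3 0 = 0) :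
    l.getD 4 0 < 0 := by
  rw [List.getD_eq_getElem (l := l) (n := 2) (d := 0) (by omega)] at h3
  rw [List.getD_eq_getElem (l := l) (n := 3) (d := 0) (by omega)] at h4
  rw [List.getD_eq_getElem (l := l) (n := 4) (d := 0) (by omega)]
  have hle : l[4]'(by omega) ≤ l[3]'(by omega) := by
    have := hsort.rel_get_of_lt (a := ⟨3, by omega⟩) (b := ⟨4, by omega⟩) (by simp)
    simpa [List.get_eq_getElem] using this
  rcases lt_or_eq_of_le hle with h | h
  · rw [h4] at h; exact h
  · exfalso
    have := count_ge_three (l := l) (a := (0:ℝ)) (i := 2) (j := 3) (k := 4)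
      (by norm_num) (by norm_num) (by omega) h3 h4 (by rw [h, h4])
    omega

end Lists

section BGstruct
variable {k : ℕ} {nn : Fin k → ℕ}
variable {k : ℕ} {nn : Fin k → ℕ}

lemma oboudi_adj_ll {i i' : Fin ((k+1)/2)} :
    (oboudi k).Adj (Sum.inl i) (Sum.inl i') ↔ i ≠ i' := by
  simp [oboudi, SimpleGraph.fromRel_adj]

lemma oboudi_adj_rr {j j' : Fin (k/2)} :
    (oboudi k).Adj (Sum.inr j) (Sum.inr j') ↔ j ≠ j' := by
  simp [oboudi, SimpleGraph.fromRel_adj]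

lemma oboudi_adj_lr {i : Fin ((k+1)/2)} {j : Fin (k/2)} :
    (oboudi k).Adj (Sum.inl i) (Sum.inr j) ↔ k / 2 ≤ (i : ℕ) + (j : ℕ) := by
  simp [oboudi, SimpleGraph.fromRel_adj]

lemma bGraph_adj (a b : Σ v : Fin ((k + 1) / 2) ⊕ Fin (k / 2), Fin (nn (toIdx v))) :
    (bGraph k nn).Adj a b ↔ a ≠ b ∧ (a.1 = b.1 ∨ (oboudi k).Adj a.1 b.1) := by
  constructor
  · rintro h
    obtain ⟨hne, h | h⟩ := (SimpleGraph.fromRel_adj _ a b).mp h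
    · exact ⟨hne, h⟩
    · rcases h with h | h
      · exact ⟨hne, Or.inl h.symm⟩
      · exact ⟨hne, Or.inr h.symm⟩
  · rintro ⟨hne, h⟩
    exact (SimpleGraph.fromRel_adj _ a b).mpr ⟨hne, Or.inl (by tauto)⟩

end BGstruct

section P4
open Sum
lemma p4_ker (nn : Fin 4 → ℕ) (hone : ∀ v : Fin ((4+1)/2) ⊕ Fin (4/2), nn (toIdx v) = 1) :
    LinearMap.ker (adjMat (bGraph 4 nn)).mulVecLin = ⊥ := by
  classical
  rw [LinearMap.ker_eq_bot']
  intro x hx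
  have hx' : (adjMat (bGraph 4 nn)).mulVec x = 0 := hx
  set G := bGraph 4 nn with hG
  letI : DecidableRel G.Adj := Classical.decRel _
  -- the canonical point of each fiber
  have hpos : ∀ v : Fin ((4+1)/2) ⊕ Fin (4/2), 0 < nn (toIdx v) := fun v => by rw [hone v]; norm_num
  set z : ∀ v : Fin ((4+1)/2) ⊕ Fin (4/2), Fin (nn (toIdx v)) := fun v => ⟨0, hpos v⟩ with hz
  have hcuniq : ∀ (v) (c : Fin (nn (toIdx v))), c = z v := by
    intro v c
    have h1 := c.isLt
    have h2 := hone v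
    apply Fin.ext
    show (c : ℕ) = 0
    omega
  have single : ∀ (v : Fin ((4+1)/2) ⊕ Fin (4/2)) (g : Fin (nn (toIdx v)) → ℝ),
      ∑ c, g c = g (z v) := by
    intro v g
    calc ∑ c, g c = ∑ _c : Fin (nn (toIdx v)), g (z v) :=
          Finset.sum_congr rfl (fun c _ => by rw [hcuniq v c])
      _ = (Finset.univ : Finset (Fin (nn (toIdx v)))).card • g (z v) := Finset.sum_const _
      _ = g (z v) := by rw [Finset.card_univ, Fintype.card_fin, hone v, one_smul]
  have hrow : ∀ a, ∑ w ∈ G.neighborFinset a, x w = 0 := fun a => ker_row G hx' a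
  have hrow' : ∀ a, (∑ v : Fin ((4+1)/2) ⊕ Fin (4/2), ∑ c : Fin (nn (toIdx v)),
      if G.Adj a ⟨v, c⟩ then x ⟨v, c⟩ else 0) = 0 := by
    intro a
    have h := hrow a
    rw [SimpleGraph.neighborFinset_eq_filter, Finset.sum_filter] at h
    have hs : (∑ w : (v : Fin ((4+1)/2) ⊕ Fin (4/2)) × Fin (nn (toIdx v)),
        if G.Adj a w then x w else 0)
        = ∑ v : Fin ((4+1)/2) ⊕ Fin (4/2), ∑ c : Fin (nn (toIdx v)),
          if G.Adj a ⟨v, c⟩ then x ⟨v, c⟩ else 0 := by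
      rw [← Finset.sum_sigma (Finset.univ) (fun _ => Finset.univ)
        (fun w => if G.Adj a w then x w else 0)]
      apply Finset.sum_congr _ (fun _ _ => rfl)
      ext ⟨v, c⟩
      simp [Finset.mem_sigma]
    rw [← hs]
    exact h
  -- adjacency facts
  have adj_simp : ∀ (v v' : Fin ((4+1)/2) ⊕ Fin (4/2)),
      G.Adj ⟨v, z v⟩ ⟨v', z v'⟩ ↔ v ≠ v' ∧ (oboudi 4).Adj v v' := by
    intro v v'
    rw [hG, bGraph_adj]
    constructor
    · rintro ⟨hne, h | h⟩
      · exfalso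
        apply hne
        have hcc : HEq (z v) (z v') := by
          subst h; rfl
        exact Sigma.ext h hcc
      · refine ⟨fun hvv => ?_, h⟩
        · subst hvv; exact (oboudi 4).irrefl h
    · rintro ⟨hne, h⟩
      refine ⟨fun hc => hne (congrArg Sigma.fst hc), Or.inr h⟩
  have e1 := hrow' ⟨inl 0, z (inl 0)⟩
  have e2 := hrow' ⟨inl 1, z (inl 1)⟩
  have e3 := hrow' ⟨inr 0, z (inr 0)⟩
  have e4 := hrow' ⟨inr 1, z (inr 1)⟩
  rw [Fintype.sum_sum_type, Fin.sum_univ_two, Fin.sum_univ_two] at e1 e2 e3 e4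
  rw [single (inl 0), single (inl 1), single (inr 0), single (inr 1)] at e1 e2 e3 e4
  have o_ll : (oboudi 4).Adj (inl 0) (inl 1) := by
    simp [oboudi, SimpleGraph.fromRel_adj]
  have o_rr : (oboudi 4).Adj (inr 0) (inr 1) := by
    simp [oboudi, SimpleGraph.fromRel_adj]
  have o_lr11 : (oboudi 4).Adj (inl 1) (inr 1) := by
    simp [oboudi, SimpleGraph.fromRel_adj]
  have no_lr00 : ¬ (oboudi 4).Adj (inl 0) (inr 0) := by
    simp [oboudi, SimpleGraph.fromRel_adj]
  have no_lr01 : ¬ (oboudi 4).Adj (inl 0) (inr 1) := by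
    simp [oboudi, SimpleGraph.fromRel_adj]
  have no_lr10 : ¬ (oboudi 4).Adj (inl 1) (inr 0) := by
    simp [oboudi, SimpleGraph.fromRel_adj]
  simp only [adj_simp, SimpleGraph.irrefl] at e1 e2 e3 e4
  rw [if_neg (by simp [SimpleGraph.irrefl]), if_pos (by exact ⟨by simp, o_ll⟩),
    if_neg (by rintro ⟨-, h⟩; exact no_lr00 h), if_neg (by rintro ⟨-, h⟩; exact no_lr01 h)] at e1
  rw [if_pos (by exact ⟨by simp, o_ll.symm⟩), if_neg (by simp [SimpleGraph.irrefl]),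
    if_neg (by rintro ⟨-, h⟩; exact no_lr10 h), if_pos (by exact ⟨by simp, o_lr11⟩)] at e2
  rw [if_neg (by rintro ⟨-, h⟩; exact no_lr00 h.symm), if_neg (by rintro ⟨-, h⟩; exact no_lr10 h.symm),
    if_neg (by simp [SimpleGraph.irrefl]), if_pos (by exact ⟨by simp, o_rr⟩)] at e3
  rw [if_neg (by rintro ⟨-, h⟩; exact no_lr01 h.symm), if_pos (by exact ⟨by simp, o_lr11.symm⟩),
    if_pos (by exact ⟨by simp, o_rr.symm⟩), if_neg (by simp [SimpleGraph.irrefl])] at e4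
  -- now e1 : x ⟨inl 1, _⟩ = 0 etc (as sums with + 0)
  funext w
  obtain ⟨v, c⟩ := w
  rw [hcuniq v c]
  show x ⟨v, z v⟩ = 0
  rcases v with vl | vr
  · match vl with
    | 0 => linarith
    | 1 => linarith
  · match vr with
    | 0 => linarith
    | 1 => linarith

end P4

section Part1
variable {k : ℕ} {nn : Fin k → ℕ}

lemma part1_main (hk4 : 4 ≤ k) (h1 : ∀ i, 1 ≤ nn i)
    (hl3 : lam (bGraph k nn) 3 = 0) (hl4 : lam (bGraph k nn) 4 = 0) :
    lam (bGraph k nn) 5 < 0 ∧ nullCount (bGraph k nn) = 2 := by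
  classical
  have hdisj : ∀ w : Σ v : Fin ((k + 1) / 2) ⊕ Fin (k / 2), Fin (nn (toIdx v)),
      ¬(w ∈ Finset.univ.filter (fun s : Σ v : Fin ((k + 1) / 2) ⊕ Fin (k / 2),
          Fin (nn (toIdx v)) => s.1.isLeft)
        ∧ w ∈ Finset.univ.filter (fun s => s.1.isRight)) := by
    rintro ⟨vl | vr, c⟩ ⟨h1', h2'⟩ <;> simp_all
  have hcover : ∀ w : Σ v : Fin ((k + 1) / 2) ⊕ Fin (k / 2), Fin (nn (toIdx v)),
      w ∈ Finset.univ.filter (fun s : Σ v : Fin ((k + 1) / 2) ⊕ Fin (k / 2),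
          Fin (nn (toIdx v)) => s.1.isLeft)
      ∨ w ∈ Finset.univ.filter (fun s => s.1.isRight) := by
    rintro ⟨vl | vr, c⟩ <;> simp
  set A := Finset.univ.filter (fun s : Σ v : Fin ((k + 1) / 2) ⊕ Fin (k / 2),
    Fin (nn (toIdx v)) => s.1.isLeft) with hAdef
  set B := Finset.univ.filter (fun s : Σ v : Fin ((k + 1) / 2) ⊕ Fin (k / 2),
    Fin (nn (toIdx v)) => s.1.isRight) with hBdef
  have hcA : ∀ u ∈ A, ∀ u' ∈ A, u ≠ u' → (bGraph k nn).Adj u u' := by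
    intro u hu u' hu' hne
    obtain ⟨i, hi⟩ := Sum.isLeft_iff.mp ((Finset.mem_filter.mp hu).2)
    obtain ⟨i', hi'⟩ := Sum.isLeft_iff.mp ((Finset.mem_filter.mp hu').2)
    rw [bGraph_adj]
    refine ⟨hne, ?_⟩
    by_cases h : u.1 = u'.1
    · exact Or.inl h
    · refine Or.inr ?_
      rw [hi, hi']
      rw [oboudi_adj_ll]
      intro he
      exact h (by rw [hi, hi', he])
  have hcB : ∀ u ∈ B, ∀ u' ∈ B, u ≠ u' → (bGraph k nn).Adj u u' := by
    intro u hu u' hu' hne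
    obtain ⟨j, hj⟩ := Sum.isRight_iff.mp ((Finset.mem_filter.mp hu).2)
    obtain ⟨j', hj'⟩ := Sum.isRight_iff.mp ((Finset.mem_filter.mp hu').2)
    rw [bGraph_adj]
    refine ⟨hne, ?_⟩
    by_cases h : u.1 = u'.1
    · exact Or.inl h
    · refine Or.inr ?_
      rw [hj, hj']
      rw [oboudi_adj_rr]
      intro he
      exact h (by rw [hj, hj', he])
  have hmono : ∀ (i i' : Fin ((k + 1) / 2))
      (u u' : Σ v : Fin ((k + 1) / 2) ⊕ Fin (k / 2), Fin (nn (toIdx v))),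
      (i : ℕ) ≤ (i' : ℕ) → u.1 = Sum.inl i → u'.1 = Sum.inl i' →
      B.filter (fun w => (bGraph k nn).Adj u w) ⊆
        B.filter (fun w => (bGraph k nn).Adj u' w) := by
    intro i i' u u' hle hu hu' w hw
    obtain ⟨hwB, hadj⟩ := Finset.mem_filter.mp hw
    obtain ⟨j, hj⟩ := Sum.isRight_iff.mp ((Finset.mem_filter.mp hwB).2)
    have hcond : k / 2 ≤ (i : ℕ) + (j : ℕ) := by
      rcases ((bGraph_adj u w).mp hadj).2 with h | h
      · rw [hu, hj] at h; exact absurd h (by simp)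
      · rw [hu, hj] at h; exact oboudi_adj_lr.mp h
    refine Finset.mem_filter.mpr ⟨hwB, ?_⟩
    rw [bGraph_adj]
    constructor
    · intro h
      have := congrArg Sigma.fst h
      rw [hu', hj] at this
      simp at this
    · refine Or.inr ?_
      rw [hu', hj]
      exact oboudi_adj_lr.mpr (by omega)
  have hnest : ∀ u ∈ A, ∀ u' ∈ A,
      B.filter (fun w => (bGraph k nn).Adj u w) ⊆
        B.filter (fun w => (bGraph k nn).Adj u' w) ∨
      B.filter (fun w => (bGraph k nn).Adj u' w) ⊆
        B.filter (fun w => (bGraph k nn).Adj u w) := by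
    intro u hu u' hu'
    obtain ⟨i, hi⟩ := Sum.isLeft_iff.mp ((Finset.mem_filter.mp hu).2)
    obtain ⟨i', hi'⟩ := Sum.isLeft_iff.mp ((Finset.mem_filter.mp hu').2)
    rcases Nat.le_total (i : ℕ) (i' : ℕ) with h | h
    · exact Or.inl (hmono i i' u u' h hi hi')
    · exact Or.inr (hmono i' i u' u h hi' hi)
  have hker := key_finrank (bGraph k nn) A B hdisj hcover hcA hcB hnest
  have hnull_le : nullCount (bGraph k nn) ≤ 2 := by
    rw [nullCount_eq_finrank]
    exact hker
  have hcard : Fintype.card (Σ v : Fin ((k + 1) / 2) ⊕ Fin (k / 2), Fin (nn (toIdx v)))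
      = ∑ v : Fin ((k + 1) / 2) ⊕ Fin (k / 2), nn (toIdx v) := by
    rw [Fintype.card_sigma]
    simp
  have hIcard : Fintype.card (Fin ((k + 1) / 2) ⊕ Fin (k / 2)) = k := by
    rw [Fintype.card_sum, Fintype.card_fin, Fintype.card_fin]
    omega
  have hcard_ge : k ≤ Fintype.card (Σ v : Fin ((k + 1) / 2) ⊕ Fin (k / 2),
      Fin (nn (toIdx v))) := by
    rw [hcard]
    calc k = ∑ _v : Fin ((k + 1) / 2) ⊕ Fin (k / 2), 1 := by
          rw [Finset.sum_const, Finset.card_univ, hIcard, smul_eq_mul, mul_one]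
      _ ≤ ∑ v : Fin ((k + 1) / 2) ⊕ Fin (k / 2), nn (toIdx v) :=
          Finset.sum_le_sum (fun i _ => h1 (toIdx i))
  have hlen := length_eigList (bGraph k nn)
  have hl3' : ((((Finset.univ.val.map (eigs (bGraph k nn))).sort (· ≤ ·)).reverse)).getD 2 0
      = 0 := by
    have h := hl3
    rw [lam_eq] at h
    exact h
  have hl4' : ((((Finset.univ.val.map (eigs (bGraph k nn))).sort (· ≤ ·)).reverse)).getD 3 0
      = 0 := by
    have h := hl4
    rw [lam_eq] at h
    exact h
  have hge2 : 2 ≤ nullCount (bGraph k nn) := by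
    rw [← count_zero_eigList (bGraph k nn)]
    exact goalA (by rw [hlen]; omega) hl3' hl4'
  have hnc : nullCount (bGraph k nn) = 2 := le_antisymm hnull_le hge2
  refine ⟨?_, hnc⟩
  by_cases hbig : 5 ≤ Fintype.card (Σ v : Fin ((k + 1) / 2) ⊕ Fin (k / 2),
      Fin (nn (toIdx v)))
  · have h5 := goalB (sorted_eigList (bGraph k nn)) (by rw [hlen]; omega)
      (by rw [count_zero_eigList (bGraph k nn), hnc]) hl3' hl4'
    rw [lam_eq]
    exact h5
  · exfalso
    have hk : k = 4 := by omega
    subst hk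
    have hone : ∀ v : Fin ((4 + 1) / 2) ⊕ Fin (4 / 2), nn (toIdx v) = 1 := by
      by_contra hcontra
      push_neg at hcontra
      obtain ⟨v0, hv0⟩ := hcontra
      have h2le : 2 ≤ nn (toIdx v0) := by
        have := h1 (toIdx v0)
        omega
      have hlt : (∑ _v : Fin ((4 + 1) / 2) ⊕ Fin (4 / 2), 1)
          < ∑ v : Fin ((4 + 1) / 2) ⊕ Fin (4 / 2), nn (toIdx v) := by
        apply Finset.sum_lt_sum (fun i _ => h1 (toIdx i))
        exact ⟨v0, Finset.mem_univ v0, by omega⟩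
      rw [Finset.sum_const, Finset.card_univ, hIcard, smul_eq_mul, mul_one] at hlt
      omega
    have h0 : nullCount (bGraph 4 nn) = 0 := by
      rw [nullCount_eq_finrank, p4_ker nn hone, finrank_bot]
    omega
end Part1

section Part2

lemma part2_main {n s : ℕ} (hs3 : 3 ≤ s) (G : SimpleGraph (Fin n))
    (hmem : memClass s G) (v : Fin n) (hX : IsXComplete G v) (hR : IsReduced G v) :
    False := by
  classical
  set A : Finset (Fin n) := Finset.univ.filter (fun u => u = v ∨ G.Adj v u) with hAdef
  set B : Finset (Fin n) := Finset.univ.filter (fun u => ¬(u = v ∨ G.Adj v u)) with hBdef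
  have hBY : ∀ u, u ∈ B ↔ u ∈ Yset G v := by
    intro u
    rw [hBdef]
    simp only [Finset.mem_filter, Finset.mem_univ, true_and, Yset, Set.mem_compl_iff,
      Set.mem_union, SimpleGraph.mem_neighborSet, Set.mem_singleton_iff]
    tauto
  have hdisj : ∀ u, ¬(u ∈ A ∧ u ∈ B) := by
    intro u hu
    obtain ⟨ha, hb⟩ := hu
    rw [hAdef] at ha
    rw [hBdef] at hb
    simp only [Finset.mem_filter, Finset.mem_univ, true_and] at ha hb
    exact hb ha
  have hcover : ∀ u, u ∈ A ∨ u ∈ B := by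
    intro u
    rw [hAdef, hBdef]
    simp only [Finset.mem_filter, Finset.mem_univ, true_and]
    tauto
  have hAmem : ∀ u, u ∈ A ↔ (u = v ∨ G.Adj v u) := by
    intro u
    rw [hAdef]
    simp
  have hcA : ∀ u ∈ A, ∀ u' ∈ A, u ≠ u' → G.Adj u u' := by
    intro u hu u' hu' hne
    rcases (hAmem u).mp hu with h | h <;> rcases (hAmem u').mp hu' with h' | h'
    · exact absurd (h.trans h'.symm) hne
    · exact h ▸ h'
    · exact h' ▸ h.symm
    · exact hX.2.2 ((SimpleGraph.mem_neighborSet G v u).mpr h)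
        ((SimpleGraph.mem_neighborSet G v u').mpr h') hne
  have hcB : ∀ u ∈ B, ∀ u' ∈ B, u ≠ u' → G.Adj u u' := by
    intro u hu u' hu' hne
    exact hX.2.1 ((hBY u).mp hu) ((hBY u').mp hu') hne
  have hsub : ∀ u u' : Fin n, G.Adj v u → G.Adj v u' →
      G.neighborSet u ∩ Yset G v ⊆ G.neighborSet u' ∩ Yset G v →
      B.filter (fun w => G.Adj u w) ⊆ B.filter (fun w => G.Adj u' w) := by
    intro u u' _ _ hss w hw
    obtain ⟨hwB, hadj⟩ := Finset.mem_filter.mp hw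
    have hwmem : w ∈ G.neighborSet u ∩ Yset G v := ⟨hadj, (hBY w).mp hwB⟩
    have hw' := hss hwmem
    exact Finset.mem_filter.mpr ⟨hwB, hw'.1⟩
  have hvempty : ∀ u u' : Fin n, u = v →
      B.filter (fun w => G.Adj u w) ⊆ B.filter (fun w => G.Adj u' w) := by
    intro u u' hu w hw
    obtain ⟨hwB, hadj⟩ := Finset.mem_filter.mp hw
    exfalso
    rw [hBdef] at hwB
    simp only [Finset.mem_filter, Finset.mem_univ, true_and] at hwB
    rw [hu] at hadj
    exact hwB (Or.inr hadj)
  have hnest : ∀ u ∈ A, ∀ u' ∈ A,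
      B.filter (fun w => G.Adj u w) ⊆ B.filter (fun w => G.Adj u' w) ∨
      B.filter (fun w => G.Adj u' w) ⊆ B.filter (fun w => G.Adj u w) := by
    intro u hu u' hu'
    rcases (hAmem u).mp hu with h | h
    · exact Or.inl (hvempty u u' h)
    · rcases (hAmem u').mp hu' with h' | h'
      · exact Or.inr (hvempty u' u h')
      · rcases hR u ((SimpleGraph.mem_neighborSet G v u).mpr h)
          u' ((SimpleGraph.mem_neighborSet G v u').mpr h') with hss | hss
        · exact Or.inl (hsub u u' h h' hss)
        · exact Or.inr (hsub u' u h' h hss)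
  have hker := key_finrank G A B hdisj hcover hcA hcB hnest
  have hle : nullCount G ≤ 2 := by
    rw [nullCount_eq_finrank]
    exact hker
  have hs := hmem.2
  omega

end Part2

theorem Dstar_nullity_two :
    (∀ (k : ℕ) (nn : Fin k → ℕ), 4 ≤ k → k ≤ 14 → (∀ i, 1 ≤ nn i) →
      (∑ i, nn i) ≤ 14 → lam (bGraph k nn) 3 = 0 → lam (bGraph k nn) 4 = 0 →
      lam (bGraph k nn) 5 < 0 ∧ nullCount (bGraph k nn) = 2) ∧
    (∀ (n s : ℕ), 3 ≤ s → s ≤ n - 3 → ∀ G : SimpleGraph (Fin n),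
      G.Connected → memClass s G → ∀ v : Fin n, IsMinDegVertex G v →
      ¬ (IsXComplete G v ∧ IsReduced G v)) := by
  constructor
  · intro k nn hk4 _ h1 _ hl3 hl4
    exact part1_main hk4 h1 hl3 hl4
  · intro n s hs3 _ G _ hmem v _ hcon
    exact part2_main hs3 G hmem v hcon.1 hcon.2

end TwoPosEig
end

section
/- Let G be a graph of order n with η(G) = n−3, i.e., the adjacency matrix of G has exactly three nonzero eigenvalues. Then p(G) = 1, and consequently G ≅ K_{n_1,n_2,n_3} ∪ rK_1, the disjoint union of a complete tripartite graph and r isolated vertices, where n_1 + n_2 + n_3 + r = n. -/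
open Matrix BigOperators

namespace TwoPosEig

variable {V : Type*}

section Basic
variable [Fintype V] [DecidableEq V] (G : SimpleGraph V)

lemma adjMat_adj {i j : V} (h : G.Adj i j) : adjMat G i j = 1 := by
  unfold adjMat
  simp [SimpleGraph.adjMatrix_apply, h]

lemma adjMat_not_adj {i j : V} (h : ¬ G.Adj i j) : adjMat G i j = 0 := by
  unfold adjMat
  simp [SimpleGraph.adjMatrix_apply, h]

lemma adjMat_nonneg (i j : V) : 0 ≤ adjMat G i j := by
  by_cases h : G.Adj i j
  · rw [adjMat_adj G h]; norm_num
  · rw [adjMat_not_adj G h]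

lemma adjMat_symm (i j : V) : adjMat G i j = adjMat G j i := by
  by_cases h : G.Adj i j
  · rw [adjMat_adj G h, adjMat_adj G h.symm]
  · rw [adjMat_not_adj G h, adjMat_not_adj G (fun hc => h hc.symm)]

lemma adj_iff_one {i j : V} : G.Adj i j ↔ adjMat G i j = 1 := by
  constructor
  · exact adjMat_adj G
  · intro h
    by_contra hc
    rw [adjMat_not_adj G hc] at h
    norm_num at h

lemma adjMat_trace : (adjMat G).trace = 0 := by
  letI := Classical.decRel G.Adj
  exact SimpleGraph.trace_adjMatrix ℝ G

lemma sum_pow_eigs (k : ℕ) : ∑ i, (eigs G i) ^ k = ((adjMat G) ^ k).trace := by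
  set A := adjMat G with hAdef
  have hA := adjMat_isHermitian G
  set U : Matrix V V ℝ := (Matrix.IsHermitian.eigenvectorUnitary hA : Matrix V V ℝ) with hU
  set D : Matrix V V ℝ := Matrix.diagonal (RCLike.ofReal ∘ hA.eigenvalues) with hD
  have hsU : star U * U = 1 := Matrix.UnitaryGroup.star_mul_self _
  have hUs : U * star U = 1 := (Matrix.IsHermitian.eigenvectorUnitary hA).2.2
  have spec : A = U * D * star U := hA.spectral_theorem
  have key : ∀ m : ℕ, A ^ m = U * D ^ m * star U := by
    intro m
    induction m with
    | zero => rw [pow_zero, pow_zero, Matrix.mul_one, hUs]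
    | succ m ih =>
        rw [pow_succ, ih]
        conv_lhs => rw [spec]
        rw [pow_succ]
        simp only [Matrix.mul_assoc]
        rw [← Matrix.mul_assoc (star U) U (D * star U), hsU, Matrix.one_mul]
  have htr : (A ^ k).trace = (D ^ k).trace := by
    rw [key k, Matrix.mul_assoc, Matrix.trace_mul_comm U (D ^ k * star U),
      Matrix.mul_assoc, hsU, Matrix.mul_one]
  rw [htr, hD, Matrix.diagonal_pow, Matrix.trace_diagonal]
  simp [eigs, RCLike.ofReal_real_eq_id]

end Basic

section Cube
variable [Fintype V] [DecidableEq V] (G : SimpleGraph V)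

lemma trace_cube_expand :
    ((adjMat G) ^ 3).trace
      = ∑ i, ∑ j, ∑ k, adjMat G i j * adjMat G j k * adjMat G k i := by
  set A := adjMat G
  have h3 : A ^ 3 = A * A * A := by rw [pow_succ, pow_succ, pow_one]
  rw [h3]
  simp only [Matrix.trace, Matrix.diag_apply, Matrix.mul_apply, Finset.sum_mul]
  apply Finset.sum_congr rfl
  intro i _
  rw [Finset.sum_comm]

lemma trace_cube_nonneg : 0 ≤ ((adjMat G) ^ 3).trace := by
  rw [trace_cube_expand]
  refine Finset.sum_nonneg fun i _ => Finset.sum_nonneg fun j _ => Finset.sum_nonneg fun k _ => ?_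
  exact mul_nonneg (mul_nonneg (adjMat_nonneg G _ _) (adjMat_nonneg G _ _)) (adjMat_nonneg G _ _)

lemma exists_triangle (h : ((adjMat G) ^ 3).trace ≠ 0) :
    ∃ u v w : V, G.Adj u v ∧ G.Adj v w ∧ G.Adj w u := by
  by_contra hno
  push_neg at hno
  apply h
  rw [trace_cube_expand]
  refine Finset.sum_eq_zero fun i _ => Finset.sum_eq_zero fun j _ => Finset.sum_eq_zero fun k _ => ?_
  by_cases h1 : G.Adj i j
  · by_cases h2 : G.Adj j k
    · by_cases h3 : G.Adj k i
      · exact absurd h3 (hno i j k h1 h2)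
      · rw [adjMat_not_adj G h3, mul_zero]
    · rw [adjMat_not_adj G h2, mul_zero, zero_mul]
  · rw [adjMat_not_adj G h1, zero_mul, zero_mul]

end Cube

section Eig
variable [Fintype V] [DecidableEq V]

lemma eig_analysis (G : SimpleGraph V) (hcard : 3 ≤ Fintype.card V)
    (h : Nat.card {i : V // eigs G i = 0} = Fintype.card V - 3) :
    Nat.card {i : V // 0 < eigs G i} = 1 ∧ 0 < ((adjMat G) ^ 3).trace ∧ (adjMat G).rank = 3 := by
  classical
  have hzero : Fintype.card {i : V // eigs G i = 0} = Fintype.card V - 3 := by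
    rw [← Nat.card_eq_fintype_card]; exact h
  have hcompl : Fintype.card {i : V // ¬ eigs G i = 0} = 3 := by
    rw [Fintype.card_subtype_compl, hzero]; omega
  have hfilter : (Finset.univ.filter (fun i => ¬ eigs G i = 0)).card = 3 := by
    rw [← Fintype.card_subtype]; exact hcompl
  obtain ⟨a, b, c, hab, hac, hbc, hset⟩ := Finset.card_eq_three.mp hfilter
  have hmem : ∀ i : V, eigs G i ≠ 0 → i = a ∨ i = b ∨ i = c := by
    intro i hi
    have hi2 : i ∈ Finset.univ.filter (fun i => ¬ eigs G i = 0) := by simp [hi]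
    rw [hset] at hi2; simpa using hi2
  have hmemF : ∀ i : V, i ∈ ({a, b, c} : Finset V) → eigs G i ≠ 0 := by
    intro i hi
    rw [← hset] at hi
    exact (Finset.mem_filter.mp hi).2
  have ha0 : eigs G a ≠ 0 := hmemF a (by simp)
  have hb0 : eigs G b ≠ 0 := hmemF b (by simp)
  have hc0 : eigs G c ≠ 0 := hmemF c (by simp)
  have hsum : ∀ k : ℕ, k ≠ 0 →
      eigs G a ^ k + eigs G b ^ k + eigs G c ^ k = ((adjMat G) ^ k).trace := by
    intro k hk
    rw [← sum_pow_eigs G k]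
    have hres : ∑ i ∈ Finset.univ.filter (fun i => ¬ eigs G i = 0), eigs G i ^ k
        = ∑ i : V, eigs G i ^ k := by
      apply Finset.sum_filter_of_ne
      intro x _ hx
      intro h0
      exact hx (by rw [h0]; exact zero_pow hk)
    rw [← hres, hset, Finset.sum_insert (by simp [hab, hac]),
      Finset.sum_insert (by simp [hbc]), Finset.sum_singleton, add_assoc]
  have h1 : eigs G a + eigs G b + eigs G c = 0 := by
    have := hsum 1 one_ne_zero
    rw [pow_one, pow_one, pow_one, pow_one, adjMat_trace] at this
    exact this
  have h3 : eigs G a ^ 3 + eigs G b ^ 3 + eigs G c ^ 3 = ((adjMat G) ^ 3).trace :=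
    hsum 3 (by norm_num)
  have htr3 := trace_cube_nonneg G
  have habc : eigs G a ^ 3 + eigs G b ^ 3 + eigs G c ^ 3
      = 3 * (eigs G a * eigs G b * eigs G c) := by
    linear_combination (eigs G a ^ 2 + eigs G b ^ 2 + eigs G c ^ 2 - eigs G a * eigs G b
      - eigs G b * eigs G c - eigs G a * eigs G c) * h1
  have hprodne : eigs G a * eigs G b * eigs G c ≠ 0 :=
    mul_ne_zero (mul_ne_zero ha0 hb0) hc0
  have hprod : 0 < eigs G a * eigs G b * eigs G c := by
    rcases lt_or_gt_of_ne hprodne with hlt | hgt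
    · exfalso; rw [habc] at h3; linarith
    · exact hgt
  have htrpos : 0 < ((adjMat G) ^ 3).trace := by
    rw [← h3, habc]; linarith
  have hrank : (adjMat G).rank = 3 := by
    rw [(adjMat_isHermitian G).rank_eq_card_non_zero_eigs]
    exact hcompl
  refine ⟨?_, htrpos, hrank⟩
  have hsigns : (0 < eigs G a ∧ eigs G b < 0 ∧ eigs G c < 0) ∨
      (0 < eigs G b ∧ eigs G a < 0 ∧ eigs G c < 0) ∨
      (0 < eigs G c ∧ eigs G a < 0 ∧ eigs G b < 0) := by
    rcases lt_or_gt_of_ne ha0 with hA | hA <;>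
      rcases lt_or_gt_of_ne hb0 with hB | hB <;>
      rcases lt_or_gt_of_ne hc0 with hC | hC
    · exfalso; linarith
    · exact Or.inr (Or.inr ⟨hC, hA, hB⟩)
    · exact Or.inr (Or.inl ⟨hB, hA, hC⟩)
    · exfalso; nlinarith [mul_pos hB hC]
    · exact Or.inl ⟨hA, hB, hC⟩
    · exfalso; nlinarith [mul_pos hA hC]
    · exfalso; nlinarith [mul_pos hA hB]
    · exfalso; linarith
  rw [Nat.card_eq_one_iff_unique]
  have key : ∃ p : V, ∀ z : V, 0 < eigs G z → z = p := by
    rcases hsigns with ⟨hp, hn1, hn2⟩ | ⟨hp, hn1, hn2⟩ | ⟨hp, hn1, hn2⟩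
    · refine ⟨a, fun z hz => ?_⟩
      rcases hmem z (ne_of_gt hz) with rfl | rfl | rfl
      · rfl
      · exact absurd hz (by linarith)
      · exact absurd hz (by linarith)
    · refine ⟨b, fun z hz => ?_⟩
      rcases hmem z (ne_of_gt hz) with rfl | rfl | rfl
      · exact absurd hz (by linarith)
      · rfl
      · exact absurd hz (by linarith)
    · refine ⟨c, fun z hz => ?_⟩
      rcases hmem z (ne_of_gt hz) with rfl | rfl | rfl
      · exact absurd hz (by linarith)
      · exact absurd hz (by linarith)
      · rfl
  obtain ⟨p, hp⟩ := key
  constructor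
  · constructor
    rintro ⟨x, hx⟩ ⟨y, hy⟩
    exact Subtype.ext ((hp x hx).trans (hp y hy).symm)
  · rcases hsigns with ⟨h', _, _⟩ | ⟨h', _, _⟩ | ⟨h', _, _⟩
    exacts [⟨a, h'⟩, ⟨b, h'⟩, ⟨c, h'⟩]

end Eig

section Classify
variable [Fintype V] [DecidableEq V]

set_option maxHeartbeats 1000000 in
lemma classify (G : SimpleGraph V) (hrank : (adjMat G).rank = 3)
    (htri : ∃ u v w : V, G.Adj u v ∧ G.Adj v w ∧ G.Adj w u) :
    ∃ ℓ : V → Fin 3 ⊕ Unit,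
      (∀ i : Fin 3, ∃ x, ℓ x = Sum.inl i) ∧
      (∀ x y, G.Adj x y ↔ ∃ i j, i ≠ j ∧ ℓ x = Sum.inl i ∧ ℓ y = Sum.inl j) := by
  classical
  obtain ⟨u, v, w, huv, hvw, hwu⟩ := htri
  have huw : G.Adj u w := hwu.symm
  have e_uu : adjMat G u u = 0 := adjMat_not_adj G (G.irrefl)
  have e_vv : adjMat G v v = 0 := adjMat_not_adj G (G.irrefl)
  have e_ww : adjMat G w w = 0 := adjMat_not_adj G (G.irrefl)
  have e_uv : adjMat G u v = 1 := adjMat_adj G huv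
  have e_vu : adjMat G v u = 1 := adjMat_adj G huv.symm
  have e_uw : adjMat G u w = 1 := adjMat_adj G huw
  have e_wu : adjMat G w u = 1 := adjMat_adj G hwu
  have e_vw : adjMat G v w = 1 := adjMat_adj G hvw
  have e_wv : adjMat G w v = 1 := adjMat_adj G hvw.symm
  -- linear independence of the three columns
  have hli : LinearIndependent ℝ ![(adjMat G)ᵀ u, (adjMat G)ᵀ v, (adjMat G)ᵀ w] := by
    rw [Fintype.linearIndependent_iff]
    intro g hg
    have h0 := congrFun hg u
    have h1 := congrFun hg v
    have h2 := congrFun hg w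
    simp only [Fin.sum_univ_three, Matrix.cons_val_zero, Matrix.cons_val_one, Matrix.head_cons,
      Matrix.cons_val_two, Matrix.tail_cons, Pi.add_apply, Pi.smul_apply,
      Matrix.transpose_apply, smul_eq_mul, Pi.zero_apply] at h0 h1 h2
    rw [e_uu, e_uv, e_uw] at h0
    rw [e_vu, e_vv, e_vw] at h1
    rw [e_wu, e_wv, e_ww] at h2
    intro i
    fin_cases i <;> simp <;> linarith
  have hWfin : Module.finrank ℝ (Submodule.span ℝ (Set.range (adjMat G)ᵀ)) = 3 := by
    exact (Matrix.rank_eq_finrank_span_cols (adjMat G)).symm.trans hrank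
  have hTfin : Module.finrank ℝ
      (Submodule.span ℝ (Set.range ![(adjMat G)ᵀ u, (adjMat G)ᵀ v, (adjMat G)ᵀ w])) = 3 := by
    rw [finrank_span_eq_card hli]; simp
  have hTle : Submodule.span ℝ (Set.range ![(adjMat G)ᵀ u, (adjMat G)ᵀ v, (adjMat G)ᵀ w])
      ≤ Submodule.span ℝ (Set.range (adjMat G)ᵀ) := by
    apply Submodule.span_le.mpr
    rintro - ⟨i, rfl⟩
    fin_cases i
    · exact Submodule.subset_span ⟨u, rfl⟩
    · exact Submodule.subset_span ⟨v, rfl⟩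
    · exact Submodule.subset_span ⟨w, rfl⟩
  have hTW := Submodule.eq_of_le_of_finrank_le hTle (by rw [hWfin, hTfin])
  have hcol : ∀ x, ∃ g : Fin 3 → ℝ,
      g 0 • (adjMat G)ᵀ u + g 1 • (adjMat G)ᵀ v + g 2 • (adjMat G)ᵀ w = (adjMat G)ᵀ x := by
    intro x
    have hx : (adjMat G)ᵀ x ∈
        Submodule.span ℝ (Set.range ![(adjMat G)ᵀ u, (adjMat G)ᵀ v, (adjMat G)ᵀ w]) := by
      rw [hTW]; exact Submodule.subset_span ⟨x, rfl⟩
    rw [Submodule.mem_span_range_iff_exists_fun] at hx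
    obtain ⟨g, hg⟩ := hx
    refine ⟨g, ?_⟩
    rw [← hg, Fin.sum_univ_three]
    simp
  have hclass : ∀ x, (adjMat G)ᵀ x = 0 ∨ (adjMat G)ᵀ x = (adjMat G)ᵀ u ∨
      (adjMat G)ᵀ x = (adjMat G)ᵀ v ∨ (adjMat G)ᵀ x = (adjMat G)ᵀ w := by
    intro x
    obtain ⟨g, hg⟩ := hcol x
    have heval : ∀ y, g 0 * adjMat G y u + g 1 * adjMat G y v + g 2 * adjMat G y w
        = adjMat G y x := by
      intro y
      have := congrFun hg y
      simpa [Matrix.transpose_apply, smul_eq_mul] using this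
    have hu' := heval u
    rw [e_uu, e_uv, e_uw] at hu'
    have hv' := heval v
    rw [e_vu, e_vv, e_vw] at hv'
    have hw' := heval w
    rw [e_wu, e_wv, e_ww] at hw'
    have hx' := heval x
    rw [adjMat_symm G x u, adjMat_symm G x v, adjMat_symm G x w,
      adjMat_not_adj G (G.irrefl)] at hx'
    have c1 : adjMat G u x = 0 ∨ adjMat G u x = 1 := by
      by_cases hh : G.Adj u x
      · exact Or.inr (adjMat_adj G hh)
      · exact Or.inl (adjMat_not_adj G hh)
    have c2 : adjMat G v x = 0 ∨ adjMat G v x = 1 := by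
      by_cases hh : G.Adj v x
      · exact Or.inr (adjMat_adj G hh)
      · exact Or.inl (adjMat_not_adj G hh)
    have c3 : adjMat G w x = 0 ∨ adjMat G w x = 1 := by
      by_cases hh : G.Adj w x
      · exact Or.inr (adjMat_adj G hh)
      · exact Or.inl (adjMat_not_adj G hh)
    rcases c1 with d1 | d1 <;> rcases c2 with d2 | d2 <;> rcases c3 with d3 | d3 <;>
      rw [d1] at hu' hx' <;> rw [d2] at hv' hx' <;> rw [d3] at hw' hx'
    -- (0,0,0)
    · have hg0 : g 0 = 0 := by linarith
      have hg1 : g 1 = 0 := by linarith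
      have hg2 : g 2 = 0 := by linarith
      left
      funext y
      have hy := heval y
      rw [hg0, hg1, hg2] at hy
      simp only [Matrix.transpose_apply, Pi.zero_apply]
      linarith
    -- (0,0,1)
    · exfalso; linarith
    -- (0,1,0)
    · exfalso; linarith
    -- (0,1,1)
    · have hg0 : g 0 = 1 := by linarith
      have hg1 : g 1 = 0 := by linarith
      have hg2 : g 2 = 0 := by linarith
      right; left
      funext y
      have hy := heval y
      rw [hg0, hg1, hg2] at hy
      simp only [Matrix.transpose_apply]
      linarith
    -- (1,0,0)
    · exfalso; linarith
    -- (1,0,1)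
    · have hg0 : g 0 = 0 := by linarith
      have hg1 : g 1 = 1 := by linarith
      have hg2 : g 2 = 0 := by linarith
      right; right; left
      funext y
      have hy := heval y
      rw [hg0, hg1, hg2] at hy
      simp only [Matrix.transpose_apply]
      linarith
    -- (1,1,0)
    · have hg0 : g 0 = 0 := by linarith
      have hg1 : g 1 = 0 := by linarith
      have hg2 : g 2 = 1 := by linarith
      right; right; right
      funext y
      have hy := heval y
      rw [hg0, hg1, hg2] at hy
      simp only [Matrix.transpose_apply]
      linarith
    -- (1,1,1)
    · exfalso; linarith
  -- distinctness of the three columns and zero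
  have hcu0 : (adjMat G)ᵀ u ≠ 0 := fun h => by
    simpa [Matrix.transpose_apply, e_vu] using congrFun h v
  have hcv0 : (adjMat G)ᵀ v ≠ 0 := fun h => by
    simpa [Matrix.transpose_apply, e_uv] using congrFun h u
  have hcw0 : (adjMat G)ᵀ w ≠ 0 := fun h => by
    simpa [Matrix.transpose_apply, e_uw] using congrFun h u
  have hcuv : (adjMat G)ᵀ u ≠ (adjMat G)ᵀ v := fun h => by
    have := congrFun h u
    rw [Matrix.transpose_apply, Matrix.transpose_apply, e_uu, e_uv] at this
    norm_num at this
  have hcuw : (adjMat G)ᵀ u ≠ (adjMat G)ᵀ w := fun h => by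
    have := congrFun h u
    rw [Matrix.transpose_apply, Matrix.transpose_apply, e_uu, e_uw] at this
    norm_num at this
  have hcvw : (adjMat G)ᵀ v ≠ (adjMat G)ᵀ w := fun h => by
    have := congrFun h v
    rw [Matrix.transpose_apply, Matrix.transpose_apply, e_vv, e_vw] at this
    norm_num at this
  -- the label function
  set ℓ : V → Fin 3 ⊕ Unit := fun x =>
    if (adjMat G)ᵀ x = (adjMat G)ᵀ u then Sum.inl 0
    else if (adjMat G)ᵀ x = (adjMat G)ᵀ v then Sum.inl 1
    else if (adjMat G)ᵀ x = (adjMat G)ᵀ w then Sum.inl 2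
    else Sum.inr () with hℓdef
  have hval : ∀ x, ((adjMat G)ᵀ x = 0 ∧ ℓ x = Sum.inr ()) ∨
      ((adjMat G)ᵀ x = (adjMat G)ᵀ u ∧ ℓ x = Sum.inl 0) ∨
      ((adjMat G)ᵀ x = (adjMat G)ᵀ v ∧ ℓ x = Sum.inl 1) ∨
      ((adjMat G)ᵀ x = (adjMat G)ᵀ w ∧ ℓ x = Sum.inl 2) := by
    intro x
    rcases hclass x with h | h | h | h
    · refine Or.inl ⟨h, ?_⟩
      rw [hℓdef]
      simp only []
      rw [h, if_neg (fun hh => hcu0 hh.symm), if_neg (fun hh => hcv0 hh.symm),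
        if_neg (fun hh => hcw0 hh.symm)]
    · refine Or.inr (Or.inl ⟨h, ?_⟩)
      rw [hℓdef]; simp only []
      rw [if_pos h]
    · refine Or.inr (Or.inr (Or.inl ⟨h, ?_⟩))
      rw [hℓdef]; simp only []
      rw [if_neg (fun hh => hcuv (h.symm.trans hh).symm), if_pos h]
    · refine Or.inr (Or.inr (Or.inr ⟨h, ?_⟩))
      rw [hℓdef]; simp only []
      rw [if_neg (fun hh => hcuw (h.symm.trans hh).symm),
        if_neg (fun hh => hcvw (h.symm.trans hh).symm), if_pos h]
  have hadj_class : ∀ x y p q : V, (adjMat G)ᵀ x = (adjMat G)ᵀ p →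
      (adjMat G)ᵀ y = (adjMat G)ᵀ q → (G.Adj x y ↔ G.Adj p q) := by
    intro x y p q hx hy
    have h1 : adjMat G x y = adjMat G x q := by
      simpa [Matrix.transpose_apply] using congrFun hy x
    have h2 : adjMat G x q = adjMat G p q := by
      have h3 : adjMat G q x = adjMat G q p := by
        simpa [Matrix.transpose_apply] using congrFun hx q
      rw [adjMat_symm G x q, h3, ← adjMat_symm G p q]
    rw [adj_iff_one G, adj_iff_one G, h1, h2]
  have hzadj : ∀ x y, (adjMat G)ᵀ x = 0 → ¬ G.Adj x y := by
    intro x y h0 hadj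
    have h1 : adjMat G y x = 0 := by
      simpa [Matrix.transpose_apply] using congrFun h0 y
    have h2 := adjMat_adj G hadj.symm
    rw [h2] at h1
    norm_num at h1
  refine ⟨ℓ, ?_, ?_⟩
  · intro i
    fin_cases i
    · refine ⟨u, ?_⟩
      rcases hval u with ⟨h, _⟩ | ⟨_, hl⟩ | ⟨h, _⟩ | ⟨h, _⟩
      · exact absurd h hcu0
      · exact hl
      · exact absurd h hcuv
      · exact absurd h hcuw
    · refine ⟨v, ?_⟩
      rcases hval v with ⟨h, _⟩ | ⟨h, _⟩ | ⟨_, hl⟩ | ⟨h, _⟩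
      · exact absurd h hcv0
      · exact absurd h.symm hcuv
      · exact hl
      · exact absurd h hcvw
    · refine ⟨w, ?_⟩
      rcases hval w with ⟨h, _⟩ | ⟨h, _⟩ | ⟨h, _⟩ | ⟨_, hl⟩
      · exact absurd h hcw0
      · exact absurd h.symm hcuw
      · exact absurd h.symm hcvw
      · exact hl
  · intro x y
    constructor
    · intro hadj
      rcases hval x with ⟨h0x, _⟩ | ⟨hx, hlx⟩ | ⟨hx, hlx⟩ | ⟨hx, hlx⟩
      · exact absurd hadj (hzadj x y h0x)
      all_goals rcases hval y with ⟨h0y, _⟩ | ⟨hy, hly⟩ | ⟨hy, hly⟩ | ⟨hy, hly⟩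
      · exact absurd hadj.symm (hzadj y x h0y)
      · exact absurd ((hadj_class x y u u hx hy).mp hadj) (G.irrefl)
      · exact ⟨0, 1, by decide, hlx, hly⟩
      · exact ⟨0, 2, by decide, hlx, hly⟩
      · exact absurd hadj.symm (hzadj y x h0y)
      · exact ⟨1, 0, by decide, hlx, hly⟩
      · exact absurd ((hadj_class x y v v hx hy).mp hadj) (G.irrefl)
      · exact ⟨1, 2, by decide, hlx, hly⟩
      · exact absurd hadj.symm (hzadj y x h0y)
      · exact ⟨2, 0, by decide, hlx, hly⟩
      · exact ⟨2, 1, by decide, hlx, hly⟩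
      · exact absurd ((hadj_class x y w w hx hy).mp hadj) (G.irrefl)
    · rintro ⟨i, j, hij, hlx, hly⟩
      rcases hval x with ⟨h0x, hl⟩ | ⟨hx, hl⟩ | ⟨hx, hl⟩ | ⟨hx, hl⟩
      · rw [hl] at hlx; exact absurd hlx (by simp)
      all_goals (rw [hl] at hlx; obtain rfl : _ = i := Sum.inl.inj hlx)
      all_goals rcases hval y with ⟨h0y, hl'⟩ | ⟨hy, hl'⟩ | ⟨hy, hl'⟩ | ⟨hy, hl'⟩
      · rw [hl'] at hly; exact absurd hly (by simp)
      · rw [hl'] at hly; obtain rfl : _ = j := Sum.inl.inj hly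
        exact absurd rfl hij
      · rw [hl'] at hly; obtain rfl : _ = j := Sum.inl.inj hly
        exact (hadj_class x y u v hx hy).mpr huv
      · rw [hl'] at hly; obtain rfl : _ = j := Sum.inl.inj hly
        exact (hadj_class x y u w hx hy).mpr huw
      · rw [hl'] at hly; exact absurd hly (by simp)
      · rw [hl'] at hly; obtain rfl : _ = j := Sum.inl.inj hly
        exact (hadj_class x y v u hx hy).mpr huv.symm
      · rw [hl'] at hly; obtain rfl : _ = j := Sum.inl.inj hly
        exact absurd rfl hij
      · rw [hl'] at hly; obtain rfl : _ = j := Sum.inl.inj hly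
        exact (hadj_class x y v w hx hy).mpr hvw
      · rw [hl'] at hly; exact absurd hly (by simp)
      · rw [hl'] at hly; obtain rfl : _ = j := Sum.inl.inj hly
        exact (hadj_class x y w u hx hy).mpr hwu
      · rw [hl'] at hly; obtain rfl : _ = j := Sum.inl.inj hly
        exact (hadj_class x y w v hx hy).mpr hvw.symm
      · rw [hl'] at hly; obtain rfl : _ = j := Sum.inl.inj hly
        exact absurd rfl hij

end Classify

def splitEquiv (F : Fin 3 ⊕ Unit → Type*) :
    (Σ o, F o) ≃ (Σ i : Fin 3, F (Sum.inl i)) ⊕ F (Sum.inr ()) where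
  toFun p := match p with
    | ⟨Sum.inl i, x⟩ => Sum.inl ⟨i, x⟩
    | ⟨Sum.inr (), x⟩ => Sum.inr x
  invFun q := match q with
    | Sum.inl ⟨i, x⟩ => ⟨Sum.inl i, x⟩
    | Sum.inr x => ⟨Sum.inr (), x⟩
  left_inv := by rintro ⟨i | ⟨⟩, x⟩ <;> rfl
  right_inv := by rintro (⟨i, x⟩ | x) <;> rfl

lemma assemble [Fintype V] [DecidableEq V] (G : SimpleGraph V) (ℓ : V → Fin 3 ⊕ Unit)
    (hne : ∀ i : Fin 3, ∃ x, ℓ x = Sum.inl i)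
    (hAdj : ∀ x y, G.Adj x y ↔ ∃ i j, i ≠ j ∧ ℓ x = Sum.inl i ∧ ℓ y = Sum.inl j) :
    ∃ (t : Fin 3 → ℕ) (r : ℕ), (∀ i, 1 ≤ t i) ∧ (∑ i, t i) + r = Fintype.card V ∧
      Nonempty (G ≃g ((SimpleGraph.completeMultipartiteGraph fun i => Fin (t i)) ⊕g
        (⊥ : SimpleGraph (Fin r)))) := by
  classical
  refine ⟨fun i => Fintype.card {x // ℓ x = Sum.inl i}, Fintype.card {x // ℓ x = Sum.inr ()},
    ?_, ?_, ?_⟩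
  · intro i
    obtain ⟨x, hx⟩ := hne i
    exact Fintype.card_pos_iff.mpr ⟨⟨x, hx⟩⟩
  · have h1 : Fintype.card V = ∑ o : Fin 3 ⊕ Unit, Fintype.card {x // ℓ x = o} := by
      rw [← Fintype.card_sigma]
      exact Fintype.card_congr (Equiv.sigmaFiberEquiv ℓ).symm
    rw [h1, Fintype.sum_sum_type]
    simp
  · set e : V ≃ ((Σ i : Fin 3, Fin (Fintype.card {x // ℓ x = Sum.inl i})) ⊕
        Fin (Fintype.card {x // ℓ x = Sum.inr ()})) :=
      (Equiv.sigmaFiberEquiv ℓ).symm.trans ((splitEquiv fun o => {x // ℓ x = o}).trans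
        (Equiv.sumCongr (Equiv.sigmaCongrRight fun i => Fintype.equivFin _)
          (Fintype.equivFin _))) with hedef
    have hfiber : ∀ (x : V) (o : Fin 3 ⊕ Unit) (h : ℓ x = o),
        (Equiv.sigmaFiberEquiv ℓ).symm x = ⟨o, ⟨x, h⟩⟩ := by
      intro x o h; subst h; rfl
    have hinl : ∀ (x : V) (i : Fin 3) (h : ℓ x = Sum.inl i),
        e x = Sum.inl ⟨i, Fintype.equivFin {x // ℓ x = Sum.inl i} ⟨x, h⟩⟩ := by
      intro x i h
      rw [hedef]
      simp only [Equiv.trans_apply]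
      rw [hfiber x _ h]
      rfl
    have hinr : ∀ (x : V) (h : ℓ x = Sum.inr ()),
        e x = Sum.inr (Fintype.equivFin {x // ℓ x = Sum.inr ()} ⟨x, h⟩) := by
      intro x h
      rw [hedef]
      simp only [Equiv.trans_apply]
      rw [hfiber x _ h]
      rfl
    refine ⟨⟨e, ?_⟩⟩
    intro a b
    rcases ha : ℓ a with i | u
    · rcases hb : ℓ b with j | u'
      · rw [hinl a i ha, hinl b j hb, hAdj]
        simp [ha, hb]
      · rw [hinl a i ha, hinr b hb, hAdj]
        simp [ha, hb]
    · rcases hb : ℓ b with j | u'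
      · rw [hinr a ha, hinl b j hb, hAdj]
        simp [ha, hb]
      · rw [hinr a ha, hinr b hb, hAdj]
        simp [ha, hb]


theorem nullity_n_sub_three {n : ℕ} (hn : 3 ≤ n) (G : SimpleGraph (Fin n))
    (h : nullCount G = n - 3) :
    posCount G = 1 ∧
    ∃ (t : Fin 3 → ℕ) (r : ℕ), (∀ i, 1 ≤ t i) ∧ (∑ i, t i) + r = n ∧
      Nonempty (G ≃g ((SimpleGraph.completeMultipartiteGraph fun i => Fin (t i)) ⊕g
        (⊥ : SimpleGraph (Fin r)))) := by
  have hcard : @Fintype.card (Fin n) (Fintype.ofFinite (Fin n)) = n := by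
    rw [← @Nat.card_eq_fintype_card (Fin n) (Fintype.ofFinite (Fin n))]; simp
  have h' : Nat.card {i : Fin n // @eigs (Fin n) (Fintype.ofFinite (Fin n))
      (Classical.decEq (Fin n)) G i = 0} = @Fintype.card (Fin n) (Fintype.ofFinite (Fin n)) - 3 := by
    rw [hcard]; exact h
  have hn' : 3 ≤ @Fintype.card (Fin n) (Fintype.ofFinite (Fin n)) := by rw [hcard]; exact hn
  obtain ⟨hpos, htr, hrank⟩ :=
    @eig_analysis (Fin n) (Fintype.ofFinite (Fin n)) (Classical.decEq (Fin n)) G hn' h'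
  refine ⟨hpos, ?_⟩
  obtain ⟨u, v, w, h1, h2, h3⟩ :=
    @exists_triangle (Fin n) (Fintype.ofFinite (Fin n)) (Classical.decEq (Fin n)) G htr.ne'
  obtain ⟨ℓ, hne, hAdj⟩ :=
    @classify (Fin n) (Fintype.ofFinite (Fin n)) (Classical.decEq (Fin n)) G hrank
      ⟨u, v, w, h1, h2, h3⟩
  obtain ⟨t, r, ht1, ht2, ht3⟩ :=
    @assemble (Fin n) (Fintype.ofFinite (Fin n)) (Classical.decEq (Fin n)) G ℓ hne hAdj
  rw [hcard] at ht2
  exact ⟨t, r, ht1, ht2, ht3⟩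

end TwoPosEig
end
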